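/- arXiv:1208.5083 — 6 statements merged into one kernel-verified Lean document; each statement's English description precedes it below -/
import Mathlib

section
/- Consider the linear program: maximize r^T x subject to, for each state s, Σ_{a : s(a)=s} x_a = 1 + γ Σ_{a : t(a)=s} x_a, and x ≥ 0. This LP is non-degenerate, and the map π ↦ x^π is a bijection between the policies of the MDP and the vertices (basic feasible solutions) of the LP; moreover x^π_a ≥ 1 for every action a in π. -/
open Finset
set_option linter.unusedSectionVars false

/-- A deterministic Markov decision process: each action `a` is usable in the
single state `src a`, gives reward `r a`, and moves deterministically to `tgt a`.
Every state has at least one usable action. -/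
structure DetMDP (S A : Type) where
  src : A → S
  tgt : A → S
  r : A → ℝ
  exists_action : ∀ s : S, ∃ a : A, src a = s

namespace DetMDP

variable {S A : Type} [Fintype S] [Fintype A] [DecidableEq S] [DecidableEq A]
variable (M : DetMDP S A)

/-- `π : S → A` is a policy if it assigns to each state an action usable there. -/
def IsPolicy (π : S → A) : Prop := ∀ s : S, M.src (π s) = s

/-- The next-state map of a policy. -/
def step (π : S → A) (s : S) : S := M.tgt (π s)

/-- `v` is the value vector of policy `π` with uniform discount `γ`:
the unique solution of `v = r_π + γ (P^π)ᵀ v`, stated pointwise. -/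
def IsValue (γ : ℝ) (π : S → A) (v : S → ℝ) : Prop :=
  ∀ s : S, v s = M.r (π s) + γ * v (M.tgt (π s))

/-- The gain (reduced cost) of action `a` with respect to a value vector `v`. -/
def gain (γ : ℝ) (v : S → ℝ) (a : A) : ℝ :=
  M.r a + γ * v (M.tgt a) - v (M.src a)

/-- `x` is the flux vector of policy `π`: it vanishes off the policy, and on the
policy it satisfies the flux (flow conservation) equations of the primal LP. -/
def IsFlux (γ : ℝ) (π : S → A) (x : A → ℝ) : Prop :=
  (∀ a : A, a ≠ π (M.src a) → x a = 0) ∧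
  ∀ s : S, (∑ a ∈ univ.filter fun a => M.src a = s, x a)
      = 1 + γ * ∑ a ∈ univ.filter fun a => M.tgt a = s, x a

/-- Action `a` is a cycle action of policy `π`: it is in `π` and its source state
lies on a cycle of the functional graph of `π` (periods are at most `|S|`). -/
def OnCycle (π : S → A) (a : A) : Prop :=
  a = π (M.src a) ∧
    ∃ k ∈ Finset.Icc 1 (Fintype.card S), (M.step π)^[k] (M.src a) = M.src a

/-- `C` is (the action set of) a cycle of the policy `π`. -/
def IsCycleOf (π : S → A) (C : Finset A) : Prop :=
  ∃ s : S, (∃ k ∈ Finset.Icc 1 (Fintype.card S), (M.step π)^[k] s = s) ∧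
    C = (Finset.range (Fintype.card S)).image fun i => π ((M.step π)^[i] s)

/-- One pivot of the simplex method with the highest-gain rule: switch to the
action of (strictly positive) maximal gain. -/
def SimplexPivot (γ : ℝ) (π π' : S → A) : Prop :=
  ∃ (v : S → ℝ) (a : A), M.IsValue γ π v ∧ 0 < M.gain γ v a ∧
    (∀ b : A, M.gain γ v b ≤ M.gain γ v a) ∧ π' = Function.update π (M.src a) a

/-- A policy is terminal if all gains are nonpositive. -/
def IsTerminal (γ : ℝ) (π : S → A) : Prop :=
  ∃ v : S → ℝ, M.IsValue γ π v ∧ ∀ a : A, M.gain γ v a ≤ 0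

/-- An execution of the simplex method with the highest-gain pivoting rule:
at every time step either a pivot occurs, or the current policy is terminal
(and the sequence stays constant). -/
def IsExecution (γ : ℝ) (seq : ℕ → S → A) : Prop :=
  (∀ t : ℕ, M.IsPolicy (seq t)) ∧
  ∀ t : ℕ, M.SimplexPivot γ (seq t) (seq (t + 1)) ∨
    (M.IsTerminal γ (seq t) ∧ seq (t + 1) = seq t)

/-- Iteration `t` of the execution creates a new cycle. -/
def NewCycleAt (seq : ℕ → S → A) (t : ℕ) : Prop :=
  ∃ C : Finset A, M.IsCycleOf (seq (t + 1)) C ∧ ¬ M.IsCycleOf (seq t) C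

/-- The feasible region of the primal flux LP. -/
def feasible (γ : ℝ) : Set (A → ℝ) :=
  {x | (∀ a : A, 0 ≤ x a) ∧
    ∀ s : S, (∑ a ∈ univ.filter fun a => M.src a = s, x a)
        = 1 + γ * ∑ a ∈ univ.filter fun a => M.tgt a = s, x a}

end DetMDP

section Core
variable {S : Type} [Fintype S] [DecidableEq S]

/-- if d = γ·(inflow of d), γ ∈ [0,1), then d = 0. -/
lemma core_zero (step : S → S) (γ : ℝ) (hγ0 : 0 ≤ γ) (hγ1 : γ < 1) (d : S → ℝ)
    (h : ∀ s, d s = γ * ∑ s' ∈ univ.filter fun s' => step s' = s, d s') :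
    ∀ s, d s = 0 := by
  have key : ∑ s, |d s| ≤ γ * ∑ s, |d s| := by
    calc ∑ s, |d s| ≤ ∑ s, γ * ∑ s' ∈ univ.filter fun s' => step s' = s, |d s'| := by
          apply Finset.sum_le_sum
          intro s _
          rw [h s, abs_mul, abs_of_nonneg hγ0]
          exact mul_le_mul_of_nonneg_left (Finset.abs_sum_le_sum_abs _ _) hγ0
      _ = γ * ∑ s, ∑ s' ∈ univ.filter fun s' => step s' = s, |d s'| := by
          rw [Finset.mul_sum]
      _ = γ * ∑ s', |d s'| := by
          rw [Finset.sum_fiberwise univ step fun s' => |d s'|]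
  have h0 : 0 ≤ ∑ s, |d s| := Finset.sum_nonneg fun s _ => abs_nonneg _
  have : ∑ s, |d s| = 0 := by nlinarith
  intro s
  have := (Finset.sum_eq_zero_iff_of_nonneg (fun s _ => abs_nonneg (d s))).mp this s (mem_univ s)
  exact abs_eq_zero.mp this

/-- Existence of a solution to y s = 1 + γ·inflow(y)(s). -/
lemma core_exists (step : S → S) (γ : ℝ) (hγ0 : 0 ≤ γ) (hγ1 : γ < 1) :
    ∃ y : S → ℝ, ∀ s, y s = 1 + γ * ∑ s' ∈ univ.filter fun s' => step s' = s, y s' := by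
  let L : (S → ℝ) →ₗ[ℝ] (S → ℝ) :=
    { toFun := fun y s => y s - γ * ∑ s' ∈ univ.filter fun s' => step s' = s, y s'
      map_add' := by
        intro y z; funext s; simp [Finset.sum_add_distrib, mul_add]; ring
      map_smul' := by
        intro c y; funext s
        simp only [Pi.smul_apply, smul_eq_mul, RingHom.id_apply]
        have : ∑ s' ∈ univ.filter (fun s' => step s' = s), c * y s'
            = c * ∑ s' ∈ univ.filter (fun s' => step s' = s), y s' := by
          rw [Finset.mul_sum]
        rw [this]; ring }
  have hinj : Function.Injective L := by
    rw [← LinearMap.ker_eq_bot, LinearMap.ker_eq_bot']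
    intro d hd
    have hd' : ∀ s, d s = γ * ∑ s' ∈ univ.filter fun s' => step s' = s, d s' := by
      intro s
      have := congrFun hd s
      simp only [L, LinearMap.coe_mk, AddHom.coe_mk, Pi.zero_apply] at this
      linarith
    funext s; exact core_zero step γ hγ0 hγ1 d hd' s
  have hsurj : Function.Surjective L := LinearMap.surjective_of_injective hinj
  obtain ⟨y, hy⟩ := hsurj (fun _ => 1)
  refine ⟨y, fun s => ?_⟩
  have := congrFun hy s
  simp only [L, LinearMap.coe_mk, AddHom.coe_mk] at this
  linarith

/-- Any solution satisfies y ≥ 1. -/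
lemma core_ge_one (step : S → S) (γ : ℝ) (hγ0 : 0 ≤ γ) (hγ1 : γ < 1) (y : S → ℝ)
    (h : ∀ s, y s = 1 + γ * ∑ s' ∈ univ.filter fun s' => step s' = s, y s') :
    ∀ s, 1 ≤ y s := by
  have hnn : ∀ s, 0 ≤ y s := by
    by_contra hc
    push_neg at hc
    set N : Finset S := univ.filter fun s => y s < 0 with hN
    have hNne : N.Nonempty := by
      obtain ⟨s, hs⟩ := hc
      exact ⟨s, by simp [hN, hs]⟩
    set T : ℝ := ∑ s ∈ N, y s with hT
    have hTneg : T < 0 := by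
      have : ∑ s ∈ N, y s < ∑ s ∈ N, (0:ℝ) := by
        apply Finset.sum_lt_sum_of_nonempty hNne
        intro s hs; exact (Finset.mem_filter.mp hs).2
      simpa using this
    -- double sum rewrite
    have hdbl : ∑ s ∈ N, ∑ s' ∈ univ.filter (fun s' => step s' = s), y s'
        = ∑ s' ∈ univ.filter (fun s' => step s' ∈ N), y s' := by
      rw [Finset.sum_filter]
      have : ∀ s ∈ univ, (if y s < 0 then ∑ s' ∈ univ.filter (fun s' => step s' = s), y s' else 0)
          = ∑ s' ∈ univ, (if y s < 0 then (if step s' = s then y s' else 0) else 0) := by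
        intro s _
        split
        · rw [Finset.sum_filter]
        · simp
      rw [Finset.sum_congr rfl this, Finset.sum_comm, Finset.sum_filter]
      apply Finset.sum_congr rfl
      intro s' _
      rw [Finset.sum_eq_single_of_mem (step s') (mem_univ _)]
      · by_cases hy : y (step s') < 0 <;> simp [hN, hy]
      · intro x _ hx
        simp [Ne.symm hx]
    have hF : T ≤ ∑ s' ∈ univ.filter (fun s' => step s' ∈ N), y s' := by
      set F := univ.filter (fun s' => step s' ∈ N) with hFdef
      have h1 : T ≤ ∑ s ∈ N ∩ F, y s := by
        rw [hT, ← Finset.sum_inter_add_sum_sdiff N F y]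
        have : ∑ s ∈ N \ F, y s ≤ 0 := by
          apply Finset.sum_nonpos
          intro s hs
          have := Finset.mem_filter.mp (Finset.mem_sdiff.mp hs).1
          exact le_of_lt this.2
        linarith
      have h2 : ∑ s ∈ N ∩ F, y s ≤ ∑ s ∈ F, y s := by
        apply Finset.sum_le_sum_of_subset_of_nonneg (Finset.inter_subset_right)
        intro s hsF hsnot
        have hsN : s ∉ N := fun hsN => hsnot (Finset.mem_inter.mpr ⟨hsN, hsF⟩)
        simp only [hN, Finset.mem_filter, mem_univ, true_and, not_lt] at hsN
        exact hsN
      linarith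
    have hTeq : T = N.card + γ * ∑ s' ∈ univ.filter (fun s' => step s' ∈ N), y s' := by
      rw [hT]
      calc ∑ s ∈ N, y s = ∑ s ∈ N, (1 + γ * ∑ s' ∈ univ.filter (fun s' => step s' = s), y s') :=
            Finset.sum_congr rfl fun s _ => h s
        _ = N.card + γ * ∑ s ∈ N, ∑ s' ∈ univ.filter (fun s' => step s' = s), y s' := by
            rw [Finset.sum_add_distrib, Finset.mul_sum]; simp
        _ = _ := by rw [hdbl]
    have hcard : (1:ℝ) ≤ N.card := by
      have := Finset.card_pos.mpr hNne
      exact_mod_cast this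
    nlinarith [mul_le_mul_of_nonneg_left hF hγ0]
  intro s
  rw [h s]
  have : 0 ≤ ∑ s' ∈ univ.filter (fun s' => step s' = s), y s' :=
    Finset.sum_nonneg fun s' _ => hnn s'
  nlinarith

end Core

section Aux
namespace DetMDP
variable {S A : Type} [Fintype S] [Fintype A] [DecidableEq S] [DecidableEq A]
variable (M : DetMDP S A)

lemma policy_injective {π : S → A} (hπ : M.IsPolicy π) : Function.Injective π :=
  fun s s' h => by rw [← hπ s, ← hπ s', h]

lemma sum_eq_sum_policy {π : S → A} (hπ : M.IsPolicy π) (g : A → ℝ)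
    (hg : ∀ a, a ≠ π (M.src a) → g a = 0) :
    ∑ a, g a = ∑ s, g (π s) := by
  have himg : ∑ s, g (π s) = ∑ a ∈ Finset.image π univ, g a :=
    (Finset.sum_image (fun s _ s' _ h => M.policy_injective hπ h)).symm
  rw [himg]
  symm
  apply Finset.sum_subset (Finset.subset_univ _)
  intro a _ ha
  apply hg
  intro heq
  exact ha (Finset.mem_image.mpr ⟨M.src a, mem_univ _, heq.symm⟩)

lemma sum_src {π : S → A} (hπ : M.IsPolicy π) (x : A → ℝ)
    (hx0 : ∀ a, a ≠ π (M.src a) → x a = 0) (s : S) :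
    (∑ a ∈ univ.filter fun a => M.src a = s, x a) = x (π s) := by
  rw [Finset.sum_filter]
  rw [M.sum_eq_sum_policy hπ (fun a => if M.src a = s then x a else 0)
    (fun a ha => by simp [hx0 a ha])]
  have : ∀ s' : S, (if M.src (π s') = s then x (π s') else 0)
      = (if s' = s then x (π s') else 0) := by
    intro s'; rw [hπ s']
  rw [Finset.sum_congr rfl (fun s' _ => this s')]
  rw [Finset.sum_ite_eq' univ s (fun s' => x (π s'))]
  simp

lemma sum_tgt {π : S → A} (hπ : M.IsPolicy π) (x : A → ℝ)
    (hx0 : ∀ a, a ≠ π (M.src a) → x a = 0) (s : S) :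
    (∑ a ∈ univ.filter fun a => M.tgt a = s, x a)
      = ∑ s' ∈ univ.filter fun s' => M.step π s' = s, x (π s') := by
  rw [Finset.sum_filter, Finset.sum_filter]
  exact M.sum_eq_sum_policy hπ (fun a => if M.tgt a = s then x a else 0)
    (fun a ha => by simp [hx0 a ha])

/-- the flux equations for the on-policy values. -/
lemma flux_vals {γ : ℝ} {π : S → A} {x : A → ℝ} (hπ : M.IsPolicy π)
    (hx : M.IsFlux γ π x) (s : S) :
    x (π s) = 1 + γ * ∑ s' ∈ univ.filter fun s' => M.step π s' = s, x (π s') := by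
  have := hx.2 s
  rwa [M.sum_src hπ x hx.1 s, M.sum_tgt hπ x hx.1 s] at this

lemma flux_ge_one {γ : ℝ} (hγ0 : 0 ≤ γ) (hγ1 : γ < 1) {π : S → A} {x : A → ℝ}
    (hπ : M.IsPolicy π) (hx : M.IsFlux γ π x) :
    ∀ a : A, a = π (M.src a) → 1 ≤ x a := by
  intro a ha
  have h1 := core_ge_one (M.step π) γ hγ0 hγ1 (fun s => x (π s))
    (fun s => M.flux_vals hπ hx s) (M.src a)
  rwa [← ha] at h1

lemma flux_nonneg {γ : ℝ} (hγ0 : 0 ≤ γ) (hγ1 : γ < 1) {π : S → A} {x : A → ℝ}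
    (hπ : M.IsPolicy π) (hx : M.IsFlux γ π x) : ∀ a : A, 0 ≤ x a := by
  intro a
  by_cases ha : a = π (M.src a)
  · linarith [M.flux_ge_one hγ0 hγ1 hπ hx a ha]
  · rw [hx.1 a ha]

lemma flux_unique {γ : ℝ} (hγ0 : 0 ≤ γ) (hγ1 : γ < 1) {π : S → A} {x x' : A → ℝ}
    (hπ : M.IsPolicy π) (hx : M.IsFlux γ π x) (hx' : M.IsFlux γ π x') : x' = x := by
  have hd : ∀ s : S, x' (π s) - x (π s)
      = γ * ∑ s' ∈ univ.filter fun s' => M.step π s' = s, (x' (π s') - x (π s')) := by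
    intro s
    have h1 := M.flux_vals hπ hx s
    have h2 := M.flux_vals hπ hx' s
    rw [Finset.sum_sub_distrib, mul_sub]
    linarith
  have hz := core_zero (M.step π) γ hγ0 hγ1 (fun s => x' (π s) - x (π s)) hd
  funext a
  by_cases ha : a = π (M.src a)
  · have := hz (M.src a)
    simp only [← ha] at this
    linarith
  · rw [hx.1 a ha, hx'.1 a ha]

lemma flux_exists {γ : ℝ} (hγ0 : 0 ≤ γ) (hγ1 : γ < 1) {π : S → A}
    (hπ : M.IsPolicy π) : ∃ x : A → ℝ, M.IsFlux γ π x := by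
  obtain ⟨y, hy⟩ := core_exists (M.step π) γ hγ0 hγ1
  refine ⟨fun a => if a = π (M.src a) then y (M.src a) else 0, ?_, ?_⟩
  · intro a ha; simp [ha]
  · intro s
    have h0 : ∀ a : A, a ≠ π (M.src a) →
        (if a = π (M.src a) then y (M.src a) else 0) = 0 := by
      intro a ha; simp [ha]
    rw [M.sum_src hπ _ h0 s, M.sum_tgt hπ _ h0 s]
    have hv : ∀ s' : S, (if π s' = π (M.src (π s')) then y (M.src (π s')) else 0) = y s' := by
      intro s'; rw [hπ s']; simp
    rw [hv s]
    rw [Finset.sum_congr rfl (fun s' _ => hv s')]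
    exact hy s

lemma flux_feasible {γ : ℝ} (hγ0 : 0 ≤ γ) (hγ1 : γ < 1) {π : S → A} {x : A → ℝ}
    (hπ : M.IsPolicy π) (hx : M.IsFlux γ π x) : x ∈ M.feasible γ :=
  ⟨M.flux_nonneg hγ0 hγ1 hπ hx, hx.2⟩

end DetMDP
end Aux

section Main
namespace DetMDP
variable {S A : Type} [Fintype S] [Fintype A] [DecidableEq S] [DecidableEq A]
variable (M : DetMDP S A)

/-- column of the constraint matrix for action `a`. -/
private def col (γ : ℝ) (a : A) : S → ℝ :=
  fun s => (if M.src a = s then (1:ℝ) else 0) - γ * (if M.tgt a = s then 1 else 0)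

private lemma col_sum (γ : ℝ) (z : A → ℝ) (s : S) :
    ∑ a, z a * M.col γ a s
      = (∑ a ∈ univ.filter fun a => M.src a = s, z a)
        - γ * ∑ a ∈ univ.filter fun a => M.tgt a = s, z a := by
  have : ∀ a : A, z a * M.col γ a s
      = (if M.src a = s then z a else 0) - γ * (if M.tgt a = s then z a else 0) := by
    intro a
    unfold col
    by_cases h1 : M.src a = s <;> by_cases h2 : M.tgt a = s <;> simp [h1, h2] <;> ring
  rw [Finset.sum_congr rfl fun a _ => this a, Finset.sum_sub_distrib,
    Finset.sum_filter, Finset.sum_filter, ← Finset.mul_sum]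

lemma flux_extreme {γ : ℝ} (hγ0 : 0 ≤ γ) (hγ1 : γ < 1) {π : S → A} {x : A → ℝ}
    (hπ : M.IsPolicy π) (hx : M.IsFlux γ π x) :
    x ∈ Set.extremePoints ℝ (M.feasible γ) := by
  refine ⟨M.flux_feasible hγ0 hγ1 hπ hx, ?_⟩
  intro x₁ hx₁ x₂ hx₂ hseg
  obtain ⟨t, u, ht, hu, htu, hxeq⟩ := hseg
  have hpt : ∀ a : A, t * x₁ a + u * x₂ a = x a := fun a => congrFun hxeq a
  have hzero : ∀ a : A, a ≠ π (M.src a) → x₁ a = 0 ∧ x₂ a = 0 := by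
    intro a ha
    have h0 := hx.1 a ha
    have h1 := hx₁.1 a
    have h2 := hx₂.1 a
    have := hpt a
    constructor <;> nlinarith
  have hf₁ : M.IsFlux γ π x₁ := ⟨fun a ha => (hzero a ha).1, hx₁.2⟩
  have hf₂ : M.IsFlux γ π x₂ := ⟨fun a ha => (hzero a ha).2, hx₂.2⟩
  exact M.flux_unique hγ0 hγ1 hπ hx hf₁

lemma extreme_support {γ : ℝ} (hγ0 : 0 ≤ γ) (hγ1 : γ < 1) {x : A → ℝ}
    (hx : x ∈ Set.extremePoints ℝ (M.feasible γ)) :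
    ∃ π : S → A, M.IsPolicy π ∧ M.IsFlux γ π x ∧
      (univ.filter fun a : A => x a ≠ 0).card = Fintype.card S := by
  obtain ⟨⟨hpos, heq⟩, hext⟩ := hx
  set supp : Finset A := univ.filter fun a => x a ≠ 0 with hsupp
  -- each state has a support action
  have hstate : ∀ s : S, ∃ a : A, M.src a = s ∧ x a ≠ 0 := by
    intro s
    by_contra hc
    push_neg at hc
    have h0 : (∑ a ∈ univ.filter fun a => M.src a = s, x a) = 0 := by
      apply Finset.sum_eq_zero
      intro a ha
      exact hc a (Finset.mem_filter.mp ha).2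
    have hin : 0 ≤ ∑ a ∈ univ.filter fun a => M.tgt a = s, x a :=
      Finset.sum_nonneg fun a _ => hpos a
    have := heq s
    nlinarith
  -- support has at most |S| elements
  have hcard : supp.card ≤ Fintype.card S := by
    by_contra hlt
    push_neg at hlt
    have hni : ¬ LinearIndependent ℝ (fun a : {a // a ∈ supp} => M.col γ a.1) := by
      intro hli
      have := hli.fintype_card_le_finrank
      rw [Module.finrank_fintype_fun_eq_card, Fintype.card_coe] at this
      omega
    obtain ⟨g, hg0, i₀, hi₀⟩ := Fintype.not_linearIndependent_iff.mp hni
    set d : A → ℝ := fun a => if h : a ∈ supp then g ⟨a, h⟩ else 0 with hd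
    have hdsupp : ∀ a : A, a ∉ supp → d a = 0 := by
      intro a ha; simp [hd, ha]
    have hdne : d i₀.1 ≠ 0 := by simp [hd, i₀.2, hi₀]
    -- the columns relation transfers to d
    have hrel : ∀ s : S, ∑ a, d a * M.col γ a s = 0 := by
      intro s
      have h1 : ∑ a, d a • M.col γ a = 0 := by
        rw [← Finset.sum_subset (Finset.subset_univ supp)
          (fun a _ ha => by rw [hdsupp a ha, zero_smul])]
        rw [← Finset.sum_coe_sort supp (fun a => d a • M.col γ a)]
        rw [← hg0]
        apply Finset.sum_congr rfl
        intro i _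
        simp [hd, i.2]
      have := congrFun h1 s
      rw [Finset.sum_apply] at this
      simpa using this
    have hds : ∀ s : S, (∑ a ∈ univ.filter fun a => M.src a = s, d a)
        = γ * ∑ a ∈ univ.filter fun a => M.tgt a = s, d a := by
      intro s
      have := M.col_sum γ d s
      rw [hrel s] at this
      linarith
    -- choose a perturbation size
    have hne : supp.Nonempty := ⟨i₀.1, i₀.2⟩
    have hAne : (univ : Finset A).Nonempty := ⟨i₀.1, mem_univ _⟩
    set m : ℝ := supp.inf' hne x with hm
    have hm0 : 0 < m := by
      rw [hm, Finset.lt_inf'_iff]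
      intro a ha
      exact lt_of_le_of_ne (hpos a) (Ne.symm (Finset.mem_filter.mp ha).2)
    set Md : ℝ := univ.sup' hAne fun a => |d a| with hMd
    have hMd0 : 0 < Md := lt_of_lt_of_le (abs_pos.mpr hdne)
      (Finset.le_sup' (fun a => |d a|) (mem_univ i₀.1))
    set ε : ℝ := m / Md with hε
    have hε0 : 0 < ε := div_pos hm0 hMd0
    have hbound : ∀ a : A, ε * |d a| ≤ m := by
      intro a
      calc ε * |d a| ≤ ε * Md :=
            mul_le_mul_of_nonneg_left (Finset.le_sup' (fun a => |d a|) (mem_univ a)) (le_of_lt hε0)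
        _ = m := by rw [hε]; field_simp
    have hnn : ∀ (σ : ℝ), σ = 1 ∨ σ = -1 → ∀ a : A, 0 ≤ x a + σ * (ε * d a) := by
      intro σ hσ a
      by_cases ha : a ∈ supp
      · have h1 : m ≤ x a := Finset.inf'_le _ ha
        have h2 := hbound a
        have h3 : |σ * (ε * d a)| ≤ m := by
          rw [abs_mul]
          have : |σ| = 1 := by rcases hσ with h | h <;> simp [h]
          rw [this, one_mul, abs_mul, abs_of_nonneg (le_of_lt hε0)]
          exact h2
        have := neg_abs_le (σ * (ε * d a))
        linarith
      · have hxa : x a = 0 := by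
          by_contra hxa
          exact ha (Finset.mem_filter.mpr ⟨mem_univ a, hxa⟩)
        rw [hxa, hdsupp a ha]
        simp
    have hfeas : ∀ (σ : ℝ), σ = 1 ∨ σ = -1 →
        (fun a => x a + σ * (ε * d a)) ∈ M.feasible γ := by
      intro σ hσ
      refine ⟨hnn σ hσ, fun s => ?_⟩
      rw [Finset.sum_add_distrib, Finset.sum_add_distrib, heq s]
      have h1 : ∑ a ∈ univ.filter (fun a => M.src a = s), σ * (ε * d a)
          = σ * ε * ∑ a ∈ univ.filter (fun a => M.src a = s), d a := by
        rw [Finset.mul_sum]; apply Finset.sum_congr rfl; intros; ring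
      have h2 : ∑ a ∈ univ.filter (fun a => M.tgt a = s), σ * (ε * d a)
          = σ * ε * ∑ a ∈ univ.filter (fun a => M.tgt a = s), d a := by
        rw [Finset.mul_sum]; apply Finset.sum_congr rfl; intros; ring
      rw [h1, h2, hds s]
      ring
    have hmem : x ∈ openSegment ℝ (fun a => x a + 1 * (ε * d a))
        (fun a => x a + (-1) * (ε * d a)) := by
      refine ⟨1/2, 1/2, by norm_num, by norm_num, by norm_num, ?_⟩
      funext a
      simp only [Pi.add_apply, Pi.smul_apply, smul_eq_mul]
      ring
    have := (hext (hfeas 1 (Or.inl rfl)) (hfeas (-1) (Or.inr rfl)) hmem)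
    have hcontr := congrFun this i₀.1
    change x i₀.1 + 1 * (ε * d i₀.1) = x i₀.1 at hcontr
    have : ε * d i₀.1 = 0 := by linarith
    rcases mul_eq_zero.mp this with h | h
    · linarith
    · exact hdne h
  -- build the policy
  choose f hf1 hf2 using hstate
  have hfinj : Function.Injective f := by
    intro s s' h
    rw [← hf1 s, ← hf1 s', h]
  have hfimg : Finset.image f univ ⊆ supp := by
    intro a ha
    obtain ⟨s, _, rfl⟩ := Finset.mem_image.mp ha
    exact Finset.mem_filter.mpr ⟨mem_univ _, hf2 s⟩
  have hcardimg : (Finset.image f univ).card = Fintype.card S := by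
    rw [Finset.card_image_of_injective _ hfinj, Finset.card_univ]
  have hsuppeq : supp = Finset.image f univ := by
    apply (Finset.eq_of_subset_of_card_le hfimg ?_).symm
    rw [hcardimg]; exact hcard
  have hmem_policy : ∀ a : A, x a ≠ 0 → a = f (M.src a) := by
    intro a hxa
    have : a ∈ supp := Finset.mem_filter.mpr ⟨mem_univ a, hxa⟩
    rw [hsuppeq] at this
    obtain ⟨s, _, rfl⟩ := Finset.mem_image.mp this
    rw [hf1 s]
  refine ⟨f, hf1, ⟨?_, heq⟩, ?_⟩
  · intro a ha
    by_contra hxa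
    exact ha (hmem_policy a hxa)
  · rw [hsuppeq, hcardimg]

end DetMDP
end Main

/-- The primal flux LP is non-degenerate, and `π ↦ x^π` is a
bijection between policies and vertices (extreme points) of the feasible region;
moreover `x^π_a ≥ 1` for every action `a` in `π`. -/
theorem simplex_mdp_lp_vertices_policies
    {S A : Type} [Fintype S] [Fintype A] [DecidableEq S] [DecidableEq A]
    (M : DetMDP S A) (γ : ℝ) (hγ0 : 0 ≤ γ) (hγ1 : γ < 1) :
    -- every policy has a unique flux vector
    (∀ π : S → A, M.IsPolicy π → ∃! x : A → ℝ, M.IsFlux γ π x) ∧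
    -- the flux vector of a policy is a vertex of the LP, with basic variables ≥ 1
    (∀ (π : S → A) (x : A → ℝ), M.IsPolicy π → M.IsFlux γ π x →
      x ∈ Set.extremePoints ℝ (M.feasible γ) ∧
      ∀ a : A, a = π (M.src a) → 1 ≤ x a) ∧
    -- distinct policies have distinct flux vectors (injectivity)
    (∀ (π π' : S → A) (x : A → ℝ), M.IsPolicy π → M.IsPolicy π' →
      M.IsFlux γ π x → M.IsFlux γ π' x → π = π') ∧
    -- every vertex of the LP is the flux vector of some policy (surjectivity)
    (∀ x ∈ Set.extremePoints ℝ (M.feasible γ),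
      ∃ π : S → A, M.IsPolicy π ∧ M.IsFlux γ π x) ∧
    -- non-degeneracy: every vertex has exactly `|S|` nonzero variables
    (∀ x ∈ Set.extremePoints ℝ (M.feasible γ),
      (Finset.univ.filter fun a : A => x a ≠ 0).card = Fintype.card S) := by
  refine ⟨?_, ?_, ?_, ?_, ?_⟩
  · intro π hπ
    obtain ⟨x, hx⟩ := M.flux_exists hγ0 hγ1 hπ
    exact ⟨x, hx, fun x' hx' => M.flux_unique hγ0 hγ1 hπ hx hx'⟩
  · intro π x hπ hx
    exact ⟨M.flux_extreme hγ0 hγ1 hπ hx, M.flux_ge_one hγ0 hγ1 hπ hx⟩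
  · intro π π' x hπ hπ' hx hx'
    funext s
    by_contra hne
    have h1 : 1 ≤ x (π s) := M.flux_ge_one hγ0 hγ1 hπ hx (π s) (by rw [hπ s])
    have h2 : x (π s) = 0 := hx'.1 (π s) (by rw [hπ s]; exact hne)
    linarith
  · intro x hx
    obtain ⟨π, hπ, hf, _⟩ := M.extreme_support hγ0 hγ1 hx
    exact ⟨π, hπ, hf⟩
  · intro x hx
    obtain ⟨π, hπ, hf, hc⟩ := M.extreme_support hγ0 hγ1 hx
    exact hc
end

section
/- Let π* be a policy of a uniformly discounted deterministic MDP all of whose gains are nonpositive, i.e., r^{π*}_a ≤ 0 for every action a (in particular, the terminating policy of an execution of the simplex method). Then v^{π*}_s ≥ v^π_s for every policy π and every state s; that is, π* simultaneously maximizes the values of all states. -/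
open Finset

/-- A policy `π*` all of whose gains are nonpositive
simultaneously maximizes the values of all states. -/
theorem terminal_policy_maximizes_all_values
    {S A : Type} [Fintype S] [Fintype A] [DecidableEq S] [DecidableEq A]
    (M : DetMDP S A) (γ : ℝ) (hγ0 : 0 ≤ γ) (hγ1 : γ < 1)
    (πstar : S → A) (hπstar : M.IsPolicy πstar)
    (vstar : S → ℝ) (hvstar : M.IsValue γ πstar vstar)
    (hgain : ∀ a : A, M.gain γ vstar a ≤ 0) :
    ∀ (π : S → A) (v : S → ℝ), M.IsPolicy π → M.IsValue γ π v →
      ∀ s : S, v s ≤ vstar s := by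
  intro π v hπ hv s
  -- consider d = v - vstar; show max of d is ≤ 0
  have hne : (Finset.univ : Finset S).Nonempty := ⟨s, Finset.mem_univ s⟩
  obtain ⟨s0, -, hmax⟩ := Finset.exists_max_image Finset.univ (fun t => v t - vstar t) hne
  have key : ∀ t : S, v t - vstar t ≤ γ * (v (M.step π t) - vstar (M.step π t)) := by
    intro t
    have h1 := hv t
    have h2 : M.r (π t) + γ * vstar (M.tgt (π t)) - vstar t ≤ 0 := by
      have := hgain (π t)
      rwa [DetMDP.gain, hπ t] at this
    simp only [DetMDP.step]
    nlinarith
  have h0 : v s0 - vstar s0 ≤ 0 := by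
    have h1 := key s0
    have h2 := hmax (M.step π s0) (Finset.mem_univ _)
    nlinarith
  have := hmax s (Finset.mem_univ s)
  linarith
end

section
/- Let π be a policy of a uniformly discounted deterministic MDP with flux vector x^π and a an action in π. If a is a path action of π then 1 ≤ x^π_a ≤ n, and if a is a cycle action of π then 1/(1−γ) ≤ x^π_a ≤ n/(1−γ). Moreover the total flux on path actions is at most n², and the total flux on cycle actions is at most n/(1−γ). -/
open Finset

set_option linter.unusedSectionVars false

section Aux
variable {S : Type} [Fintype S] [DecidableEq S]

lemma exists_small_period {f : S → S} {s : S} {m : ℕ} (hm : 1 ≤ m) (hfix : f^[m] s = s) :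
    ∃ k ∈ Finset.Icc 1 (Fintype.card S), f^[k] s = s := by
  obtain ⟨i, j, hlt, hle, hij⟩ :
      ∃ i j : ℕ, i < j ∧ j ≤ Fintype.card S ∧ f^[i] s = f^[j] s := by
    obtain ⟨i, j, hne, hij⟩ := Fintype.exists_ne_map_eq_of_card_lt
      (fun i : Fin (Fintype.card S + 1) => f^[(i : ℕ)] s) (by simp)
    rcases lt_or_gt_of_ne hne with h | h
    · exact ⟨i, j, h, Nat.lt_succ_iff.mp j.isLt, hij⟩
    · exact ⟨j, i, h, Nat.lt_succ_iff.mp i.isLt, hij.symm⟩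
  have hmj : f^[m * j] s = s := by
    rw [Function.iterate_mul]; exact Function.iterate_fixed hfix j
  have hj_le : j ≤ m * j := Nat.le_mul_of_pos_left j hm
  have h1 : f^[m * j - j + i] s = s := by
    have e1 : f^[m * j - j + i] s = f^[m * j - j] (f^[i] s) := Function.iterate_add_apply f _ _ s
    rw [e1, hij, ← Function.iterate_add_apply]
    have : m * j - j + j = m * j := by omega
    rw [this, hmj]
  refine ⟨j - i, Finset.mem_Icc.mpr ⟨by omega, by omega⟩, ?_⟩
  have e2 : f^[j - i] s = f^[(j - i) + (m * j - j + i)] s := by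
    rw [Function.iterate_add_apply, h1]
  rw [e2]
  have : (j - i) + (m * j - j + i) = m * j := by omega
  rw [this, hmj]

variable {γ : ℝ} {f : S → S} {y : S → ℝ}

lemma flux_total (hγ1 : γ < 1)
    (hy : ∀ s, y s = 1 + γ * ∑ s' ∈ univ.filter (fun s' => f s' = s), y s') :
    ∑ s, y s = (Fintype.card S : ℝ) / (1 - γ) := by
  have h1γ : (0:ℝ) < 1 - γ := by linarith
  have key : ∑ s, y s = (Fintype.card S : ℝ) + γ * ∑ s, y s := by
    calc ∑ s, y s = ∑ s, (1 + γ * ∑ s' ∈ univ.filter (fun s' => f s' = s), y s') :=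
          Finset.sum_congr rfl fun s _ => hy s
      _ = (Fintype.card S : ℝ) + γ * ∑ s, ∑ s' ∈ univ.filter (fun s' => f s' = s), y s' := by
          rw [Finset.sum_add_distrib, Finset.sum_const, ← Finset.mul_sum]
          simp [mul_comm]
      _ = (Fintype.card S : ℝ) + γ * ∑ s, y s := by
          rw [Finset.sum_fiberwise]
  field_simp
  linarith

lemma flux_iterate
    (hy : ∀ s, y s = 1 + γ * ∑ s' ∈ univ.filter (fun s' => f s' = s), y s') (K : ℕ) (s : S) :
    y s = (∑ k ∈ Finset.range K, γ ^ k * ((univ.filter fun s' => f^[k] s' = s).card : ℝ))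
      + γ ^ K * ∑ s' ∈ univ.filter (fun s' => f^[K] s' = s), y s' := by
  induction K with
  | zero =>
    simp only [Finset.range_zero, Finset.sum_empty, pow_zero, one_mul, zero_add]
    symm
    refine Finset.sum_eq_single_of_mem s (Finset.mem_filter.mpr ⟨Finset.mem_univ _, rfl⟩) ?_
    intro b hb hne
    exact absurd (Finset.mem_filter.mp hb).2 hne
  | succ K ih =>
    rw [ih]
    have step1 : ∑ s' ∈ univ.filter (fun s' => f^[K] s' = s), y s'
        = ((univ.filter fun s' => f^[K] s' = s).card : ℝ)
          + γ * ∑ s'' ∈ univ.filter (fun s'' => f^[K+1] s'' = s), y s'' := by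
      calc ∑ s' ∈ univ.filter (fun s' => f^[K] s' = s), y s'
          = ∑ s' ∈ univ.filter (fun s' => f^[K] s' = s),
              (1 + γ * ∑ s'' ∈ univ.filter (fun s'' => f s'' = s'), y s'') :=
            Finset.sum_congr rfl fun s' _ => hy s'
        _ = ((univ.filter fun s' => f^[K] s' = s).card : ℝ)
            + γ * ∑ s' ∈ univ.filter (fun s' => f^[K] s' = s),
                ∑ s'' ∈ univ.filter (fun s'' => f s'' = s'), y s'' := by
            rw [Finset.sum_add_distrib, Finset.sum_const, ← Finset.mul_sum]
            simp [mul_comm]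
        _ = ((univ.filter fun s' => f^[K] s' = s).card : ℝ)
            + γ * ∑ s'' ∈ univ.filter (fun s'' => f^[K+1] s'' = s), y s'' := by
            rw [Finset.sum_fiberwise_eq_sum_filter]
            refine congrArg _ (congrArg _ ?_)
            refine Finset.sum_congr (Finset.filter_congr ?_) fun _ _ => rfl
            intro s'' _
            simp [Function.iterate_succ_apply]
    rw [step1, Finset.sum_range_succ]
    ring
end Aux

section Aux2
variable {S : Type} [Fintype S] [DecidableEq S]
variable {γ : ℝ} {f : S → S} {y : S → ℝ}

lemma flux_remainder_abs (K : ℕ) (s : S) :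
    |∑ s' ∈ univ.filter (fun s' => f^[K] s' = s), y s'| ≤ ∑ s', |y s'| := by
  calc |∑ s' ∈ univ.filter (fun s' => f^[K] s' = s), y s'|
      ≤ ∑ s' ∈ univ.filter (fun s' => f^[K] s' = s), |y s'| := Finset.abs_sum_le_sum_abs _ _
    _ ≤ ∑ s', |y s'| := Finset.sum_le_sum_of_subset_of_nonneg (Finset.subset_univ _)
        (fun _ _ _ => abs_nonneg _)

lemma flux_one_le (hγ0 : 0 ≤ γ) (hγ1 : γ < 1)
    (hy : ∀ s, y s = 1 + γ * ∑ s' ∈ univ.filter (fun s' => f s' = s), y s') (s : S) :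
    1 ≤ y s := by
  set C := ∑ s', |y s'| with hC
  have key : ∀ K : ℕ, 1 - γ ^ (K + 1) * C ≤ y s := by
    intro K
    have hit := flux_iterate hy (K + 1) s
    have hterm : (1:ℝ) ≤ ∑ k ∈ Finset.range (K + 1), γ ^ k * ((univ.filter fun s' => f^[k] s' = s).card : ℝ) := by
      have h0mem : 0 ∈ Finset.range (K + 1) := Finset.mem_range.mpr (Nat.succ_pos K)
      have := Finset.single_le_sum (f := fun k => γ ^ k * ((univ.filter fun s' => f^[k] s' = s).card : ℝ))
        (fun k _ => mul_nonneg (pow_nonneg hγ0 _) (Nat.cast_nonneg _)) h0mem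
      refine le_trans (le_of_eq ?_) this
      show (1:ℝ) = γ ^ 0 * ((univ.filter fun s' => f^[0] s' = s).card : ℝ)
      have hc : (univ.filter fun s' => f^[0] s' = s).card = 1 :=
        Finset.card_eq_one.mpr ⟨s, Finset.eq_singleton_iff_unique_mem.mpr
          ⟨Finset.mem_filter.mpr ⟨Finset.mem_univ _, rfl⟩, fun t ht => (Finset.mem_filter.mp ht).2⟩⟩
      rw [pow_zero, one_mul, hc, Nat.cast_one]
    have hrem : -(γ ^ (K + 1) * C) ≤ γ ^ (K + 1) * ∑ s' ∈ univ.filter (fun s' => f^[K + 1] s' = s), y s' := by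
      have h1 : -C ≤ ∑ s' ∈ univ.filter (fun s' => f^[K + 1] s' = s), y s' :=
        neg_le_of_abs_le (flux_remainder_abs (K + 1) s)
      have := mul_le_mul_of_nonneg_left h1 (pow_nonneg hγ0 (K + 1))
      linarith [this]
    linarith [hit, hterm, hrem]
  have htend : Filter.Tendsto (fun K : ℕ => 1 - γ ^ (K + 1) * C) Filter.atTop (nhds 1) := by
    have h1 : Filter.Tendsto (fun K : ℕ => γ ^ K) Filter.atTop (nhds 0) :=
      tendsto_pow_atTop_nhds_zero_of_lt_one hγ0 hγ1
    have h1' : Filter.Tendsto (fun K : ℕ => γ ^ (K + 1)) Filter.atTop (nhds 0) :=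
      h1.comp (Filter.tendsto_add_atTop_nat 1)
    have h2 := ((h1'.mul_const C).const_sub 1)
    simpa using h2
  exact le_of_tendsto' htend fun K => key K

lemma flux_nonneg (hγ0 : 0 ≤ γ) (hγ1 : γ < 1)
    (hy : ∀ s, y s = 1 + γ * ∑ s' ∈ univ.filter (fun s' => f s' = s), y s') (s : S) :
    0 ≤ y s := le_trans zero_le_one (flux_one_le hγ0 hγ1 hy s)

lemma flux_path_le (hγ0 : 0 ≤ γ) (hγ1 : γ < 1)
    (hy : ∀ s, y s = 1 + γ * ∑ s' ∈ univ.filter (fun s' => f s' = s), y s')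
    {s : S} (hs : ∀ k, 1 ≤ k → f^[k] s ≠ s) :
    y s ≤ (Fintype.card S : ℝ) := by
  set C := ∑ s', |y s'| with hC
  have key : ∀ K : ℕ, y s ≤ (Fintype.card S : ℝ) + γ ^ K * C := by
    intro K
    have hit := flux_iterate hy K s
    have hdisj : ∀ k ∈ Finset.range K, ∀ j ∈ Finset.range K, k ≠ j →
        Disjoint (univ.filter fun s' => f^[k] s' = s) (univ.filter fun s' => f^[j] s' = s) := by
      have base : ∀ k j : ℕ, k < j →
          Disjoint (univ.filter fun s' => f^[k] s' = s) (univ.filter fun s' => f^[j] s' = s) := by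
        intro k j hkj
        rw [Finset.disjoint_left]
        intro s' h1 h2
        simp only [Finset.mem_filter, Finset.mem_univ, true_and] at h1 h2
        apply hs (j - k) (by omega)
        have : f^[(j - k) + k] s' = f^[j - k] (f^[k] s') := Function.iterate_add_apply f _ _ s'
        have e : (j - k) + k = j := by omega
        rw [e] at this
        rw [← h1] at *
        rw [← this, h2]
      intro k _ j _ hne
      rcases lt_or_gt_of_ne hne with h | h
      · exact base k j h
      · exact (base j k h).symm
    have hcards : ∑ k ∈ Finset.range K, ((univ.filter fun s' => f^[k] s' = s).card : ℝ)
        ≤ (Fintype.card S : ℝ) := by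
      have := Finset.card_biUnion hdisj
      have hsub : ((Finset.range K).biUnion fun k => univ.filter fun s' => f^[k] s' = s).card
          ≤ Fintype.card S := by
        rw [← Finset.card_univ]
        exact Finset.card_le_card (Finset.subset_univ _)
      rw [this] at hsub
      exact_mod_cast hsub
    have hterm : ∑ k ∈ Finset.range K, γ ^ k * ((univ.filter fun s' => f^[k] s' = s).card : ℝ)
        ≤ (Fintype.card S : ℝ) := by
      refine le_trans (Finset.sum_le_sum fun k _ => ?_) hcards
      have h1 : γ ^ k ≤ 1 := pow_le_one₀ hγ0 (le_of_lt hγ1)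
      have h2 : (0:ℝ) ≤ ((univ.filter fun s' => f^[k] s' = s).card : ℝ) := Nat.cast_nonneg _
      nlinarith
    have hrem : γ ^ K * ∑ s' ∈ univ.filter (fun s' => f^[K] s' = s), y s' ≤ γ ^ K * C := by
      exact mul_le_mul_of_nonneg_left (le_of_abs_le (flux_remainder_abs K s)) (pow_nonneg hγ0 K)
    linarith [hit, hterm, hrem]
  have htend : Filter.Tendsto (fun K : ℕ => (Fintype.card S : ℝ) + γ ^ K * C) Filter.atTop
      (nhds (Fintype.card S : ℝ)) := by
    have h1 : Filter.Tendsto (fun K : ℕ => γ ^ K) Filter.atTop (nhds 0) :=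
      tendsto_pow_atTop_nhds_zero_of_lt_one hγ0 hγ1
    have h2 := (h1.mul_const C).const_add (Fintype.card S : ℝ)
    simpa using h2
  exact ge_of_tendsto' htend fun K => key K

lemma flux_chain (hγ0 : 0 ≤ γ) (hγ1 : γ < 1)
    (hy : ∀ s, y s = 1 + γ * ∑ s' ∈ univ.filter (fun s' => f s' = s), y s') :
    ∀ (k : ℕ) (s s' : S), f^[k] s' = s →
      (∑ i ∈ Finset.range k, γ ^ i) + γ ^ k * y s' ≤ y s := by
  intro k
  induction k with
  | zero => intro s s' h; simp at h; subst h; simp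
  | succ k ih =>
    intro s s' h
    rw [Function.iterate_succ_apply] at h
    have hih := ih s (f s') h
    have hstep : 1 + γ * y s' ≤ y (f s') := by
      rw [hy (f s')]
      have hmem : s' ∈ univ.filter (fun s'' => f s'' = f s') := by simp
      have := Finset.single_le_sum (f := fun s'' => y s'')
        (fun s'' _ => flux_nonneg hγ0 hγ1 hy s'') hmem
      nlinarith
    have hk : (0:ℝ) ≤ γ ^ k := pow_nonneg hγ0 k
    have := mul_le_mul_of_nonneg_left hstep hk
    rw [Finset.sum_range_succ]
    have e : γ ^ k * (1 + γ * y s') = γ ^ k + γ ^ (k+1) * y s' := by ring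
    linarith [hih, this]

lemma flux_cycle_le (hγ0 : 0 ≤ γ) (hγ1 : γ < 1)
    (hy : ∀ s, y s = 1 + γ * ∑ s' ∈ univ.filter (fun s' => f s' = s), y s')
    {s : S} {p : ℕ} (hp : 1 ≤ p) (hps : f^[p] s = s) :
    1 / (1 - γ) ≤ y s := by
  have key : ∀ K : ℕ, ∑ i ∈ Finset.range K, γ ^ i ≤ y s := by
    intro K
    have hfix : f^[p * K] s = s := by
      rw [Function.iterate_mul]; exact Function.iterate_fixed hps K
    have hch := flux_chain hγ0 hγ1 hy (p * K) s s hfix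
    have h1 : (0:ℝ) ≤ γ ^ (p * K) * y s :=
      mul_nonneg (pow_nonneg hγ0 _) (flux_nonneg hγ0 hγ1 hy s)
    have h2 : ∑ i ∈ Finset.range K, γ ^ i ≤ ∑ i ∈ Finset.range (p * K), γ ^ i :=
      Finset.sum_le_sum_of_subset_of_nonneg
        (Finset.range_subset_range.mpr (Nat.le_mul_of_pos_left K hp))
        (fun i _ _ => pow_nonneg hγ0 i)
    linarith
  have htend : Filter.Tendsto (fun K : ℕ => ∑ i ∈ Finset.range K, γ ^ i) Filter.atTop
      (nhds (1 / (1 - γ))) := by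
    have h := (hasSum_geometric_of_lt_one hγ0 hγ1).tendsto_sum_nat
    simpa [one_div] using h
  exact le_of_tendsto' htend fun K => key K

end Aux2


open scoped Classical in
/-- Flux layers: path actions carry flux in `[1, n]`, cycle
actions carry flux in `[1/(1−γ), n/(1−γ)]`; total path flux is at most `n²` and
total cycle flux is at most `n/(1−γ)`. -/
theorem flux_layers
    {S A : Type} [Fintype S] [Fintype A] [DecidableEq S] [DecidableEq A]
    (M : DetMDP S A) (γ : ℝ) (hγ0 : 0 ≤ γ) (hγ1 : γ < 1)
    (π : S → A) (hπ : M.IsPolicy π)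
    (x : A → ℝ) (hx : M.IsFlux γ π x) :
    (∀ a : A, a = π (M.src a) →
      (¬ M.OnCycle π a → 1 ≤ x a ∧ x a ≤ (Fintype.card S : ℝ)) ∧
      (M.OnCycle π a →
        1 / (1 - γ) ≤ x a ∧ x a ≤ (Fintype.card S : ℝ) / (1 - γ))) ∧
    (∑ a ∈ Finset.univ.filter (fun a : A => a = π (M.src a) ∧ ¬ M.OnCycle π a), x a)
        ≤ (Fintype.card S : ℝ) ^ 2 ∧
    (∑ a ∈ Finset.univ.filter (fun a : A => M.OnCycle π a), x a)
        ≤ (Fintype.card S : ℝ) / (1 - γ) := by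
  classical
  obtain ⟨hx0, hx2⟩ := hx
  set y : S → ℝ := fun s => x (π s) with hydef
  have hsrc : ∀ s, ∑ a ∈ univ.filter (fun a => M.src a = s), x a = y s := by
    intro s
    apply Finset.sum_eq_single_of_mem (π s)
    · simp [hπ s]
    · intro b hb hbne
      apply hx0
      have hb' : M.src b = s := (Finset.mem_filter.mp hb).2
      rw [hb']
      exact hbne
  have htgt : ∀ s, ∑ a ∈ univ.filter (fun a => M.tgt a = s), x a
      = ∑ s' ∈ univ.filter (fun s' => M.step π s' = s), y s' := by
    intro s
    rw [← Finset.sum_filter_add_sum_filter_not (univ.filter fun a => M.tgt a = s)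
      (fun a => a = π (M.src a))]
    have hz : ∑ a ∈ (univ.filter fun a => M.tgt a = s).filter
        (fun a => ¬ a = π (M.src a)), x a = 0 :=
      Finset.sum_eq_zero fun a ha => hx0 a (Finset.mem_filter.mp ha).2
    rw [hz, add_zero]
    refine Finset.sum_bij' (fun a _ => M.src a) (fun s' _ => π s') ?_ ?_ ?_ ?_ ?_
    · intro a ha
      simp only [Finset.mem_filter, Finset.mem_univ, true_and] at ha ⊢
      obtain ⟨hts, hpa⟩ := ha
      show M.tgt (π (M.src a)) = s
      rw [← hpa, hts]
    · intro s' hs'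
      simp only [Finset.mem_filter, Finset.mem_univ, true_and] at hs' ⊢
      constructor
      · exact hs'
      · rw [hπ s']
    · intro a ha
      simp only [Finset.mem_filter, Finset.mem_univ, true_and] at ha
      exact ha.2.symm
    · intro s' _
      exact hπ s'
    · intro a ha
      simp only [Finset.mem_filter, Finset.mem_univ, true_and] at ha
      show x a = y (M.src a)
      simp only [hydef]
      rw [← ha.2]
  have hy : ∀ s, y s = 1 + γ * ∑ s' ∈ univ.filter (fun s' => M.step π s' = s), y s' := by
    intro s
    rw [← hsrc s, hx2 s, htgt s]
  have h1le : ∀ s, 1 ≤ y s := flux_one_le hγ0 hγ1 hy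
  have hynn : ∀ s, 0 ≤ y s := flux_nonneg hγ0 hγ1 hy
  have htotal : ∑ s, y s = (Fintype.card S : ℝ) / (1 - γ) := flux_total hγ1 hy
  have hxa : ∀ a, a = π (M.src a) → x a = y (M.src a) := by
    intro a ha
    simp only [hydef]
    rw [← ha]
  have hupper_all : ∀ s, y s ≤ (Fintype.card S : ℝ) / (1 - γ) := by
    intro s
    rw [← htotal]
    exact Finset.single_le_sum (fun s' _ => hynn s') (Finset.mem_univ s)
  have hpath : ∀ a, a = π (M.src a) → ¬ M.OnCycle π a →
      1 ≤ x a ∧ x a ≤ (Fintype.card S : ℝ) := by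
    intro a ha hnc
    have hxe := hxa a ha
    have hnp : ∀ k, 1 ≤ k → (M.step π)^[k] (M.src a) ≠ M.src a := by
      intro k hk hfk
      obtain ⟨k', hk', hfk'⟩ := exists_small_period hk hfk
      exact hnc ⟨ha, k', hk', hfk'⟩
    rw [hxe]
    exact ⟨h1le _, flux_path_le hγ0 hγ1 hy hnp⟩
  refine ⟨?_, ?_, ?_⟩
  · intro a ha
    refine ⟨hpath a ha, ?_⟩
    intro hc
    obtain ⟨-, p, hp, hps⟩ := hc
    have hp1 : 1 ≤ p := (Finset.mem_Icc.mp hp).1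
    rw [hxa a ha]
    exact ⟨flux_cycle_le hγ0 hγ1 hy hp1 hps, hupper_all _⟩
  · set P := univ.filter (fun a : A => a = π (M.src a) ∧ ¬ M.OnCycle π a) with hP
    have hbound : ∀ a ∈ P, x a ≤ (Fintype.card S : ℝ) := by
      intro a haP
      have ha := (Finset.mem_filter.mp haP).2
      exact (hpath a ha.1 ha.2).2
    have hcard : P.card ≤ Fintype.card S := by
      rw [← Finset.card_univ (α := S)]
      apply Finset.card_le_card_of_injOn M.src (fun _ _ => Finset.mem_univ _)
      intro a haP b hbP h
      have ha := (Finset.mem_filter.mp haP).2.1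
      have hb := (Finset.mem_filter.mp hbP).2.1
      rw [ha, hb, h]
    calc ∑ a ∈ P, x a ≤ P.card • (Fintype.card S : ℝ) :=
          Finset.sum_le_card_nsmul P x _ hbound
      _ = (P.card : ℝ) * (Fintype.card S : ℝ) := nsmul_eq_mul _ _
      _ ≤ (Fintype.card S : ℝ) * (Fintype.card S : ℝ) := by
          apply mul_le_mul_of_nonneg_right _ (Nat.cast_nonneg _)
          exact_mod_cast hcard
      _ = (Fintype.card S : ℝ) ^ 2 := by ring
  · have hxnn : ∀ a, 0 ≤ x a := by
      intro a
      by_cases ha : a = π (M.src a)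
      · rw [hxa a ha]; exact hynn _
      · rw [hx0 a ha]
    have huniv : ∑ a, x a = ∑ s, y s := by
      rw [← Finset.sum_fiberwise univ M.src x]
      exact Finset.sum_congr rfl fun s _ => hsrc s
    calc ∑ a ∈ univ.filter (fun a : A => M.OnCycle π a), x a
        ≤ ∑ a, x a := Finset.sum_le_sum_of_subset_of_nonneg (Finset.subset_univ _)
          (fun a _ _ => hxnn a)
      _ = (Fintype.card S : ℝ) / (1 - γ) := by rw [huniv, htotal]
end

section
/- Suppose the simplex method with the highest-gain pivoting rule on a uniformly discounted deterministic MDP pivots from policy π to policy π', and π' contains no cycle that is not a cycle of π. Let π'' be any policy all of whose cycles are cycles of π. Then r^T(x^{π''} − x^{π'}) ≤ (1 − 1/n²)·r^T(x^{π''} − x^π). -/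
open Finset

section DetMDPAux

open DetMDP

set_option linter.unusedSectionVars false

variable {S A : Type} [Fintype S] [Fintype A] [DecidableEq S] [DecidableEq A]
variable (M : DetMDP S A)

/-- sum over actions with source `s` of a function vanishing off policy `σ`. -/
lemma sum_filter_src (σ : S → A) (hσ : M.IsPolicy σ) (h : A → ℝ)
    (h0 : ∀ a, a ≠ σ (M.src a) → h a = 0) (s : S) :
    ∑ a ∈ univ.filter (fun a => M.src a = s), h a = h (σ s) := by
  apply Finset.sum_eq_single_of_mem
  · simp [hσ s]
  · intro a ha hne
    simp only [mem_filter] at ha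
    exact h0 a (by rw [ha.2]; exact hne)

/-- sum over actions with target `s` of a function vanishing off policy `σ`. -/
lemma sum_filter_tgt (σ : S → A) (hσ : M.IsPolicy σ) (h : A → ℝ)
    (h0 : ∀ a, a ≠ σ (M.src a) → h a = 0) (s : S) :
    ∑ a ∈ univ.filter (fun a => M.tgt a = s), h a
      = ∑ s' ∈ univ.filter (fun s' => M.step σ s' = s), h (σ s') := by
  have key : ∑ a ∈ univ.filter (fun a => M.tgt a = s), h a
      = ∑ s' : S, ∑ a ∈ (univ.filter (fun a => M.tgt a = s)).filter
          (fun a => M.src a = s'), h a := by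
    rw [Finset.sum_fiberwise]
  rw [key]
  rw [Finset.sum_filter]
  apply Finset.sum_congr rfl
  intro s' _
  by_cases hs' : M.step σ s' = s
  · rw [if_pos hs']
    apply Finset.sum_eq_single_of_mem
    · simp [hσ s', hs']
      exact hs'
    · intro a ha hne
      simp only [mem_filter] at ha
      exact h0 a (by rw [ha.2]; exact hne)
  · rw [if_neg hs']
    apply Finset.sum_eq_zero
    intro a ha
    simp only [mem_filter, mem_univ, true_and] at ha
    apply h0
    intro hcon
    apply hs'
    show M.tgt (σ s') = s
    rw [ha.2] at hcon
    rw [← hcon, ha.1]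

/-- flux recurrence in state coordinates -/
lemma flux_rec (γ : ℝ) (σ : S → A) (hσ : M.IsPolicy σ) (x : A → ℝ)
    (hx : M.IsFlux γ σ x) (s : S) :
    x (σ s) = 1 + γ * ∑ s' ∈ univ.filter (fun s' => M.step σ s' = s), x (σ s') := by
  have h1 := sum_filter_src M σ hσ x hx.1 s
  have h2 := sum_filter_tgt M σ hσ x hx.1 s
  rw [← h1, hx.2 s, h2]

/-- flux of a policy is ≥ 1 on policy actions -/
lemma flux_ge_one (γ : ℝ) (hγ0 : 0 ≤ γ) (hγ1 : γ < 1) (σ : S → A) (hσ : M.IsPolicy σ)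
    (x : A → ℝ) (hx : M.IsFlux γ σ x) (s : S) : 1 ≤ x (σ s) := by
  -- first nonnegativity via ℓ¹ negative-part argument
  have hnn : ∀ s : S, 0 ≤ x (σ s) := by
    by_contra hcon
    push_neg at hcon
    set Q : ℝ := ∑ s : S, max 0 (-(x (σ s))) with hQ
    have hQ0 : 0 ≤ Q := Finset.sum_nonneg fun s _ => le_max_left _ _
    have hterm : ∀ s : S, max 0 (-(x (σ s)))
        ≤ γ * ∑ s' ∈ univ.filter (fun s' => M.step σ s' = s), max 0 (-(x (σ s'))) := by
      intro s
      have hrec := flux_rec M γ σ hσ x hx s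
      have hrhs : 0 ≤ γ * ∑ s' ∈ univ.filter (fun s' => M.step σ s' = s),
          max 0 (-(x (σ s'))) :=
        mul_nonneg hγ0 (Finset.sum_nonneg fun _ _ => le_max_left _ _)
      rcases le_or_gt 0 (x (σ s)) with h | h
      · simpa [max_eq_left, neg_nonpos.mpr h] using hrhs
      · have hmax : max 0 (-(x (σ s))) = -(x (σ s)) := max_eq_right (by linarith)
        rw [hmax, hrec]
        have hsum : -∑ s' ∈ univ.filter (fun s' => M.step σ s' = s), x (σ s')
            ≤ ∑ s' ∈ univ.filter (fun s' => M.step σ s' = s), max 0 (-(x (σ s'))) := by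
          rw [← Finset.sum_neg_distrib]
          exact Finset.sum_le_sum fun s' _ => le_max_right _ _
        nlinarith
    have hsumQ : Q ≤ γ * Q := by
      calc Q ≤ ∑ s : S, γ * ∑ s' ∈ univ.filter (fun s' => M.step σ s' = s),
            max 0 (-(x (σ s'))) := Finset.sum_le_sum fun s _ => hterm s
        _ = γ * ∑ s : S, ∑ s' ∈ univ.filter (fun s' => M.step σ s' = s),
            max 0 (-(x (σ s'))) := by rw [Finset.mul_sum]
        _ = γ * Q := by
            rw [hQ]
            congr 1
            exact Finset.sum_fiberwise univ (fun s' => M.step σ s') _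
    obtain ⟨s0, hs0⟩ := hcon
    have hQpos : 0 < Q := by
      have : 0 < max 0 (-(x (σ s0))) := by
        rw [max_eq_right (by linarith)]; linarith
      have hle : max 0 (-(x (σ s0))) ≤ Q :=
        Finset.single_le_sum (fun s _ => le_max_left 0 (-(x (σ s)))) (mem_univ s0)
      linarith
    nlinarith
  have hrec := flux_rec M γ σ hσ x hx s
  have : 0 ≤ ∑ s' ∈ univ.filter (fun s' => M.step σ s' = s), x (σ s') :=
    Finset.sum_nonneg fun s' _ => hnn s'
  nlinarith

/-- iterate-fiber helper: if `f^[p] w = w` and `f^[m] w = t` then `f^[p] t = t`. -/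
lemma periodic_push {f : S → S} {w t : S} {p m : ℕ} (hp : f^[p] w = w)
    (hm : f^[m] w = t) : f^[p] t = t := by
  rw [← hm, ← Function.iterate_add_apply, Nat.add_comm, Function.iterate_add_apply, hp]

/-- unfolding the flux recurrence `k` times -/
lemma flux_unfold (γ : ℝ) (σ : S → A) (hσ : M.IsPolicy σ) (x : A → ℝ)
    (hx : M.IsFlux γ σ x) (s0 : S) (k : ℕ) :
    x (σ s0) = (∑ j ∈ Finset.range k,
        γ ^ j * ((univ.filter fun s' => (M.step σ)^[j] s' = s0).card : ℝ))
      + γ ^ k * ∑ s' ∈ univ.filter (fun s' => (M.step σ)^[k] s' = s0), x (σ s') := by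
  induction k with
  | zero =>
      simp only [Finset.range_zero, Finset.sum_empty, pow_zero, one_mul, zero_add,
        Function.iterate_zero, id_eq]
      symm
      refine Finset.sum_eq_single_of_mem s0 ?_ ?_
      · exact Finset.mem_filter.mpr ⟨mem_univ _, rfl⟩
      intro s' hs' hne
      exact absurd (Finset.mem_filter.mp hs').2 hne
  | succ k ih =>
      rw [ih]
      have hstep : ∑ s' ∈ univ.filter (fun s' => (M.step σ)^[k] s' = s0), x (σ s')
          = ((univ.filter fun s' => (M.step σ)^[k] s' = s0).card : ℝ)
            + γ * ∑ w ∈ univ.filter (fun w => (M.step σ)^[k+1] w = s0), x (σ w) := by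
        have h1 : ∀ s' ∈ univ.filter (fun s' => (M.step σ)^[k] s' = s0),
            x (σ s') = 1 + γ * ∑ w ∈ univ.filter (fun w => M.step σ w = s'), x (σ w) :=
          fun s' _ => flux_rec M γ σ hσ x hx s'
        rw [Finset.sum_congr rfl h1, Finset.sum_add_distrib]
        congr 1
        · rw [Finset.sum_const, nsmul_eq_mul, mul_one]
        · rw [← Finset.mul_sum]
          congr 1
          -- partition the fiber of step^[k+1] by the value of step
          have := Finset.sum_fiberwise (univ.filter (fun w => (M.step σ)^[k+1] w = s0))
            (fun w => M.step σ w) (fun w => x (σ w))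
          rw [← this]
          rw [Finset.sum_filter]
          apply Finset.sum_congr rfl
          intro s' _
          by_cases hs' : (M.step σ)^[k] s' = s0
          · rw [if_pos hs']
            apply Finset.sum_congr _ (fun _ _ => rfl)
            ext w
            simp only [mem_filter, mem_univ, true_and]
            constructor
            · intro hw
              refine ⟨?_, hw⟩
              rw [Function.iterate_succ_apply, hw, hs']
            · rintro ⟨hw1, hw2⟩; exact hw2
          · rw [if_neg hs']
            symm
            apply Finset.sum_eq_zero
            intro w hw
            simp only [mem_filter, mem_univ, true_and, Function.iterate_succ_apply] at hw
            exact absurd (hw.2 ▸ (Finset.mem_filter.mp hw.1).2 : (M.step σ)^[k] s' = s0) hs'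
      rw [hstep]
      rw [Finset.sum_range_succ]
      ring_nf

/-- If `s0` is not on a cycle, its flux is at most `|S|`. -/
lemma flux_le_card (γ : ℝ) (hγ0 : 0 ≤ γ) (hγ1 : γ < 1) (σ : S → A) (hσ : M.IsPolicy σ)
    (x : A → ℝ) (hx : M.IsFlux γ σ x) (s0 : S)
    (hnc : ¬ ∃ k ∈ Finset.Icc 1 (Fintype.card S), (M.step σ)^[k] s0 = s0) :
    x (σ s0) ≤ (Fintype.card S : ℝ) := by
  set n := Fintype.card S with hn
  set f := M.step σ with hf
  -- auxiliary: from any return to s0 get small-period contradiction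
  have haux : ∀ (w : S) (p m : ℕ), 1 ≤ p → p ≤ n → f^[p] w = w → f^[m] w = s0 → False := by
    intro w p m hp1 hpn hper hm
    exact hnc ⟨p, Finset.mem_Icc.mpr ⟨hp1, hpn⟩, periodic_push hper hm⟩
  -- the level sets
  set L : ℕ → Finset S := fun j => univ.filter (fun s' => f^[j] s' = s0) with hL
  -- level n is empty
  have hempty : L n = ∅ := by
    rw [Finset.eq_empty_iff_forall_notMem]
    intro s' hs'
    simp only [hL, mem_filter, mem_univ, true_and] at hs'
    -- pigeonhole on iterates 0..n
    obtain ⟨i, _, j, _, hij, heq⟩ :=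
      Finset.exists_ne_map_eq_of_card_lt_of_maps_to
        (s := Finset.range (n+1)) (t := (univ : Finset S))
        (by simp [hn]) (fun i _ => mem_univ (f^[i] s'))
    rcases Nat.lt_or_ge i j with hlt | hge
    · have hper : f^[j - i] (f^[i] s') = f^[i] s' := by
        rw [← Function.iterate_add_apply, Nat.sub_add_cancel (Nat.le_of_lt hlt), ← heq]
      have hm : f^[n - i] (f^[i] s') = s0 := by
        rw [← Function.iterate_add_apply, Nat.sub_add_cancel]
        · exact hs'
        · exact Nat.le_of_lt_succ (Finset.mem_range.mp (by assumption))
      exact haux _ (j - i) (n - i) (Nat.sub_pos_of_lt hlt)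
        (Nat.le_trans (Nat.sub_le _ _) (Nat.le_of_lt_succ (Finset.mem_range.mp (by assumption)))) hper hm
    · have hlt' : j < i := Nat.lt_of_le_of_ne hge (fun h => hij h.symm)
      have hper : f^[i - j] (f^[j] s') = f^[j] s' := by
        rw [← Function.iterate_add_apply, Nat.sub_add_cancel (Nat.le_of_lt hlt'), heq]
      have hm : f^[n - j] (f^[j] s') = s0 := by
        rw [← Function.iterate_add_apply, Nat.sub_add_cancel]
        · exact hs'
        · exact Nat.le_of_lt_succ (Finset.mem_range.mp (by assumption))
      exact haux _ (i - j) (n - j) (Nat.sub_pos_of_lt hlt')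
        (Nat.le_trans (Nat.sub_le _ _) (Nat.le_of_lt_succ (Finset.mem_range.mp (by assumption)))) hper hm
  -- levels are pairwise disjoint
  have hdisj : ∀ i ∈ Finset.range n, ∀ j ∈ Finset.range n, i ≠ j →
      Disjoint (L i) (L j) := by
    have key : ∀ i j : ℕ, i < j → j ≤ n → Disjoint (L i) (L j) := by
      intro i j hij hjn
      rw [Finset.disjoint_left]
      intro s' hi hj
      simp only [hL, mem_filter, mem_univ, true_and] at hi hj
      have hper : f^[j - i] s0 = s0 := by
        conv_lhs => rw [← hi]
        rw [← Function.iterate_add_apply, Nat.sub_add_cancel (Nat.le_of_lt hij), hj]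
      exact haux s0 (j - i) 0 (Nat.sub_pos_of_lt hij)
        (Nat.le_trans (Nat.sub_le _ _) hjn) hper rfl
    intro i hi j hj hij
    rcases Nat.lt_or_ge i j with h | h
    · exact key i j h (Nat.le_of_lt (Finset.mem_range.mp hj))
    · exact (key j i (Nat.lt_of_le_of_ne h (fun hh => hij hh.symm))
        (Nat.le_of_lt (Finset.mem_range.mp hi))).symm
  -- total count of levels below n is at most n
  have hcount : ∑ j ∈ Finset.range n, (L j).card ≤ n := by
    rw [← Finset.card_biUnion hdisj]
    exact le_trans (Finset.card_le_card (Finset.subset_univ _)) (le_of_eq rfl)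
  -- unfold and bound
  have hu := flux_unfold M γ σ hσ x hx s0 n
  have hempty' : (univ.filter fun s' : S => (M.step σ)^[n] s' = s0) = ∅ := hempty
  rw [hempty'] at hu
  simp only [Finset.sum_empty, mul_zero, add_zero] at hu
  rw [hu]
  calc ∑ j ∈ Finset.range n, γ ^ j * (((univ.filter fun s' : S => (M.step σ)^[j] s' = s0)).card : ℝ)
      ≤ ∑ j ∈ Finset.range n, (((univ.filter fun s' : S => (M.step σ)^[j] s' = s0)).card : ℝ) := by
        apply Finset.sum_le_sum
        intro j _
        have h1 : γ ^ j ≤ 1 := pow_le_one₀ hγ0 (le_of_lt hγ1)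
        have h2 : (0:ℝ) ≤ (((univ.filter fun s' : S => (M.step σ)^[j] s' = s0)).card : ℝ) := Nat.cast_nonneg _
        nlinarith
    _ ≤ (n : ℝ) := by exact_mod_cast hcount

/-- key LP identity: gains against any flux vector -/
lemma sum_gain_flux (γ : ℝ) (v : S → ℝ) (x : A → ℝ)
    (hflux : ∀ s : S, (∑ a ∈ univ.filter fun a => M.src a = s, x a)
      = 1 + γ * ∑ a ∈ univ.filter fun a => M.tgt a = s, x a) :
    ∑ a : A, M.gain γ v a * x a = ∑ a : A, M.r a * x a - ∑ s : S, v s := by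
  have hsrc : ∑ a : A, v (M.src a) * x a
      = ∑ s : S, v s * ∑ a ∈ univ.filter (fun a => M.src a = s), x a := by
    rw [← Finset.sum_fiberwise univ (fun a => M.src a) (fun a => v (M.src a) * x a)]
    apply Finset.sum_congr rfl
    intro s _
    rw [Finset.mul_sum]
    apply Finset.sum_congr rfl
    intro a ha
    simp only [mem_filter] at ha
    rw [ha.2]
  have htgt : ∑ a : A, v (M.tgt a) * x a
      = ∑ s : S, v s * ∑ a ∈ univ.filter (fun a => M.tgt a = s), x a := by
    rw [← Finset.sum_fiberwise univ (fun a => M.tgt a) (fun a => v (M.tgt a) * x a)]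
    apply Finset.sum_congr rfl
    intro s _
    rw [Finset.mul_sum]
    apply Finset.sum_congr rfl
    intro a ha
    simp only [mem_filter] at ha
    rw [ha.2]
  have hexp : ∑ a : A, M.gain γ v a * x a
      = ∑ a : A, M.r a * x a + γ * ∑ a : A, v (M.tgt a) * x a
        - ∑ a : A, v (M.src a) * x a := by
    rw [Finset.mul_sum, ← Finset.sum_add_distrib, ← Finset.sum_sub_distrib]
    apply Finset.sum_congr rfl
    intro a _
    simp only [DetMDP.gain]
    ring
  rw [hexp, hsrc, htgt]
  have : ∑ s : S, v s * ∑ a ∈ univ.filter (fun a => M.src a = s), x a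
      = ∑ s : S, (v s + γ * (v s * ∑ a ∈ univ.filter (fun a => M.tgt a = s), x a)) := by
    apply Finset.sum_congr rfl
    intro s _
    rw [hflux s]
    ring
  rw [this, Finset.sum_add_distrib, ← Finset.mul_sum]
  ring


end DetMDPAux

/-- If the simplex method pivots from `π` to `π'` without
creating a new cycle, then for any policy `π''` all of whose cycles are cycles of
`π`, `rᵀ(x^{π''} − x^{π'}) ≤ (1 − 1/n²)·rᵀ(x^{π''} − x^π)`. -/
theorem path_pivot_contraction
    {S A : Type} [Fintype S] [Fintype A] [DecidableEq S] [DecidableEq A]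
    (M : DetMDP S A) (γ : ℝ) (hγ0 : 0 ≤ γ) (hγ1 : γ < 1)
    (π π' π'' : S → A)
    (hπ : M.IsPolicy π) (hπ'' : M.IsPolicy π'')
    (hpivot : M.SimplexPivot γ π π')
    (hnonew : ∀ C : Finset A, M.IsCycleOf π' C → M.IsCycleOf π C)
    (hsub : ∀ C : Finset A, M.IsCycleOf π'' C → M.IsCycleOf π C)
    (x x' x'' : A → ℝ)
    (hx : M.IsFlux γ π x) (hx' : M.IsFlux γ π' x') (hx'' : M.IsFlux γ π'' x'') :
    ∑ a : A, M.r a * (x'' a - x' a)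
      ≤ (1 - 1 / (Fintype.card S : ℝ) ^ 2) * ∑ a : A, M.r a * (x'' a - x a) := by
  classical
  rcases isEmpty_or_nonempty S with hS | hS
  · have : IsEmpty A := ⟨fun a => hS.false (M.src a)⟩
    simp
  obtain ⟨vv, astar, hv, hgpos, hgmax, hπ'def⟩ := hpivot
  set n := Fintype.card S with hn
  have hn1 : 1 ≤ n := Fintype.card_pos
  set g : A → ℝ := M.gain γ vv with hg
  have hπ' : M.IsPolicy π' := by
    intro s
    rw [hπ'def, Function.update_apply]
    by_cases h : s = M.src astar
    · rw [if_pos h, h]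
    · rw [if_neg h]; exact hπ s
  have hgain0 : ∀ s : S, g (π s) = 0 := by
    intro s
    show M.gain γ vv (π s) = 0
    unfold DetMDP.gain
    rw [hπ s, ← hv s]
    ring
  -- per-policy state sums
  have hstate : ∀ (σ : S → A), M.IsPolicy σ → ∀ (z : A → ℝ), M.IsFlux γ σ z →
      ∑ a : A, g a * z a = ∑ s : S, g (σ s) * z (σ s) := by
    intro σ hσ z hz
    rw [← Finset.sum_fiberwise univ (fun a => M.src a) (fun a => g a * z a)]
    apply Finset.sum_congr rfl
    intro s _
    exact sum_filter_src M σ hσ (fun a => g a * z a)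
      (fun a ha => by show g a * z a = 0; rw [hz.1 a ha, mul_zero]) s
  -- Σ g x = 0
  have hsum_gx : ∑ a : A, g a * x a = 0 := by
    rw [hstate π hπ x hx]
    exact Finset.sum_eq_zero fun s _ => by rw [hgain0 s, zero_mul]
  -- Σ g x' = g a* · x' a*
  have hπ'star : π' (M.src astar) = astar := by
    rw [hπ'def, Function.update_self]
  have hsum_gx' : ∑ a : A, g a * x' a = g astar * x' astar := by
    rw [hstate π' hπ' x' hx']
    rw [Finset.sum_eq_single_of_mem (M.src astar) (mem_univ _)]
    · rw [hπ'star]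
    · intro s _ hne
      have : π' s = π s := by rw [hπ'def, Function.update_of_ne hne]
      rw [this, hgain0 s, zero_mul]
  -- x' a* ≥ 1
  have hx'ge : 1 ≤ x' astar := by
    have := flux_ge_one M γ hγ0 hγ1 π' hπ' x' hx' (M.src astar)
    rwa [hπ'star] at this
  -- Σ g x'' ≤ n² g a*
  have hsum_gx'' : ∑ a : A, g a * x'' a ≤ (n : ℝ)^2 * g astar := by
    rw [hstate π'' hπ'' x'' hx'']
    have hterm : ∀ s : S, g (π'' s) * x'' (π'' s) ≤ g astar * (n : ℝ) := by
      intro s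
      by_cases hcyc : ∃ k ∈ Finset.Icc 1 n, (M.step π'')^[k] s = s
      · -- cycle state: gain is zero
        have hC'' : M.IsCycleOf π''
            ((Finset.range n).image fun i => π'' ((M.step π'')^[i] s)) := ⟨s, hcyc, rfl⟩
        obtain ⟨s1, _, hCdef⟩ := hsub _ hC''
        have hmem : π'' s ∈ (Finset.range n).image fun i => π'' ((M.step π'')^[i] s) :=
          Finset.mem_image.mpr ⟨0, Finset.mem_range.mpr hn1, by simp⟩
        rw [hCdef] at hmem
        obtain ⟨i, _, hi⟩ := Finset.mem_image.mp hmem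
        have hzero : g (π'' s) = 0 := by rw [← hi]; exact hgain0 _
        rw [hzero, zero_mul]
        positivity
      · -- path state: gain ≤ g a*, flux in [1, n]
        have hle : x'' (π'' s) ≤ (n : ℝ) := flux_le_card M γ hγ0 hγ1 π'' hπ'' x'' hx'' s hcyc
        have hge : (0:ℝ) ≤ x'' (π'' s) := le_trans zero_le_one
          (flux_ge_one M γ hγ0 hγ1 π'' hπ'' x'' hx'' s)
        have hgle : g (π'' s) ≤ g astar := hgmax _
        rcases le_or_gt (g (π'' s)) 0 with h | h
        · nlinarith
        · nlinarith
    calc ∑ s : S, g (π'' s) * x'' (π'' s) ≤ ∑ _s : S, g astar * (n : ℝ) :=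
          Finset.sum_le_sum fun s _ => hterm s
      _ = (n : ℝ) * (g astar * (n : ℝ)) := by
          rw [Finset.sum_const, nsmul_eq_mul]; rfl
      _ = (n : ℝ)^2 * g astar := by ring
  -- LP identities
  have hA := sum_gain_flux M γ vv x'' hx''.2
  have hB := sum_gain_flux M γ vv x' hx'.2
  have hC := sum_gain_flux M γ vv x hx.2
  simp only [← hg] at hA hB hC
  -- rewrite the goal
  have hgoal1 : ∑ a : A, M.r a * (x'' a - x' a)
      = ∑ a : A, g a * x'' a - ∑ a : A, g a * x' a := by
    simp only [mul_sub]
    rw [Finset.sum_sub_distrib]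
    linarith [hA, hB]
  have hgoal2 : ∑ a : A, M.r a * (x'' a - x a)
      = ∑ a : A, g a * x'' a := by
    simp only [mul_sub]
    rw [Finset.sum_sub_distrib]
    linarith [hA, hC, hsum_gx]
  rw [hgoal1, hgoal2, hsum_gx']
  set D := ∑ a : A, g a * x'' a with hD
  have hN1 : (1:ℝ) ≤ (n:ℝ) := by exact_mod_cast hn1
  have hN2 : (0:ℝ) < (n:ℝ)^2 := by positivity
  have key : D ≤ g astar * x' astar * (n:ℝ)^2 := by
    have h5 : ((n:ℝ)^2 * g astar) * 1 ≤ ((n:ℝ)^2 * g astar) * x' astar :=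
      mul_le_mul_of_nonneg_left hx'ge (mul_pos hN2 hgpos).le
    nlinarith [h5]
  have hdiv : D / (n:ℝ)^2 ≤ g astar * x' astar := (div_le_iff₀ hN2).mpr key
  have hexp : (1 - 1 / (n:ℝ)^2) * D = D - D / (n:ℝ)^2 := by
    field_simp
  linarith [hdiv, hexp]
end

section
/- In any execution of the simplex method with the highest-gain pivoting rule on a uniformly discounted deterministic MDP, starting from any policy in the execution, within (m+n)·⌈log_{n²/(n²−1)} n²⌉ = O(n² m log n) iterations either the execution terminates or some iteration creates a new cycle. -/
open Finset

namespace DetMDP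

section Aux

set_option linter.unusedSectionVars false

variable {S A : Type} [Fintype S] [Fintype A] [DecidableEq S] [DecidableEq A]
variable (M : DetMDP S A)

/-- Existence of a value vector for any policy, via the Banach fixed point theorem. -/
lemma exists_isValue {γ : ℝ} (hγ0 : 0 ≤ γ) (hγ1 : γ < 1) (π : S → A) :
    ∃ v : S → ℝ, M.IsValue γ π v := by
  set T : (S → ℝ) → (S → ℝ) := fun v s => M.r (π s) + γ * v (M.tgt (π s)) with hT
  have hlip : LipschitzWith ⟨γ, hγ0⟩ T := by
    apply LipschitzWith.of_dist_le_mul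
    intro u v
    show dist (T u) (T v) ≤ γ * dist u v
    have h0 : (0:ℝ) ≤ γ * dist u v := by positivity
    rw [dist_pi_le_iff h0]
    intro s
    have h1 : dist (T u s) (T v s) = γ * |u (M.tgt (π s)) - v (M.tgt (π s))| := by
      simp only [T, Real.dist_eq]
      rw [show (M.r (π s) + γ * u (M.tgt (π s))) - (M.r (π s) + γ * v (M.tgt (π s)))
          = γ * (u (M.tgt (π s)) - v (M.tgt (π s))) by ring, abs_mul, abs_of_nonneg hγ0]
    rw [h1]
    have h2 := dist_le_pi_dist u v (M.tgt (π s))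
    rw [Real.dist_eq] at h2
    have : γ * |u (M.tgt (π s)) - v (M.tgt (π s))| ≤ γ * dist u v :=
      mul_le_mul_of_nonneg_left h2 hγ0
    simpa using this
  have hc : ContractingWith ⟨γ, hγ0⟩ T := ⟨by exact_mod_cast hγ1, hlip⟩
  refine ⟨hc.fixedPoint T, ?_⟩
  intro s
  have hfix : T (ContractingWith.fixedPoint T hc) = ContractingWith.fixedPoint T hc :=
    hc.fixedPoint_isFixedPt
  exact congrFun hfix.symm s

open Classical in
/-- The value vector of a policy (junk value if it does not exist). -/
noncomputable def val (γ : ℝ) (π : S → A) : S → ℝ :=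
  if h : ∃ v : S → ℝ, M.IsValue γ π v then h.choose else 0

lemma isValue_val {γ : ℝ} (hγ0 : 0 ≤ γ) (hγ1 : γ < 1) (π : S → A) :
    M.IsValue γ π (M.val γ π) := by
  rw [val]
  rw [dif_pos (M.exists_isValue hγ0 hγ1 π)]
  exact (M.exists_isValue hγ0 hγ1 π).choose_spec

/-- Uniqueness of value vectors. -/
lemma isValue_unique {γ : ℝ} (hγ0 : 0 ≤ γ) (hγ1 : γ < 1) {π : S → A} {v w : S → ℝ}
    (hv : M.IsValue γ π v) (hw : M.IsValue γ π w) : v = w := by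
  rcases isEmpty_or_nonempty S with h | h
  · funext s; exact (h.false s).elim
  · have key : ∀ x, v x - w x = γ * (v (M.tgt (π x)) - w (M.tgt (π x))) := by
      intro x
      have h1 := hv x
      have h2 := hw x
      ring_nf
      linarith
    obtain ⟨x₀, -, hx₀⟩ := Finset.exists_max_image Finset.univ
      (fun x => |v x - w x|) Finset.univ_nonempty
    have h1 : |v x₀ - w x₀| ≤ γ * |v x₀ - w x₀| := by
      calc |v x₀ - w x₀| = γ * |v (M.tgt (π x₀)) - w (M.tgt (π x₀))| := by
            rw [key x₀, abs_mul, abs_of_nonneg hγ0]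
        _ ≤ γ * |v x₀ - w x₀| :=
            mul_le_mul_of_nonneg_left (hx₀ _ (Finset.mem_univ _)) hγ0
    have h2 : |v x₀ - w x₀| = 0 := by nlinarith [abs_nonneg (v x₀ - w x₀)]
    funext x
    have h3 : |v x - w x| ≤ 0 := by
      have := hx₀ x (Finset.mem_univ x); linarith
    have h4 : |v x - w x| = 0 := le_antisymm h3 (abs_nonneg _)
    have := abs_eq_zero.mp h4
    linarith

lemma val_eq {γ : ℝ} (hγ0 : 0 ≤ γ) (hγ1 : γ < 1) {π : S → A} {v : S → ℝ}
    (hv : M.IsValue γ π v) : v = M.val γ π :=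
  M.isValue_unique hγ0 hγ1 hv (M.isValue_val hγ0 hγ1 π)

lemma gain_policy_eq_zero {γ : ℝ} {π : S → A} {v : S → ℝ}
    (hπ : M.IsPolicy π) (hv : M.IsValue γ π v) (x : S) : M.gain γ v (π x) = 0 := by
  have h1 := hv x
  rw [gain, hπ x]
  linarith

/-- The fundamental difference identity: for the value `w` of a policy `π` and an
arbitrary vector `u`, the difference satisfies a recursion driven by gains. -/
lemma diff_rec {γ : ℝ} {π : S → A} {w : S → ℝ}
    (hw : M.IsValue γ π w) (hπ : M.IsPolicy π) (u : S → ℝ) (x : S) :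
    w x - u x = γ * (w (M.step π x) - u (M.step π x)) + M.gain γ u (π x) := by
  have h1 := hw x
  rw [gain, hπ x, step]
  linarith

/-- Recursion with nonnegative driver has nonnegative solution. -/
lemma rec_nonneg [Nonempty S] {γ : ℝ} (hγ0 : 0 ≤ γ) (hγ1 : γ < 1) (σ : S → S) (D h : S → ℝ)
    (hid : ∀ x, D x = γ * D (σ x) + h x) (hh : ∀ x, 0 ≤ h x) : ∀ x, 0 ≤ D x := by
  obtain ⟨x₀, -, hx₀⟩ := Finset.exists_min_image Finset.univ D Finset.univ_nonempty
  have h1 : D x₀ = γ * D (σ x₀) + h x₀ := hid x₀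
  have h2 : γ * D x₀ ≤ γ * D (σ x₀) :=
    mul_le_mul_of_nonneg_left (hx₀ _ (Finset.mem_univ _)) hγ0
  have h3 : 0 ≤ D x₀ := by nlinarith [hh x₀]
  intro x
  exact le_trans h3 (hx₀ x (Finset.mem_univ x))

/-- Unfolding the recursion `k` steps. -/
lemma rec_unfold {γ : ℝ} (σ : S → S) (D h : S → ℝ)
    (hid : ∀ x, D x = γ * D (σ x) + h x) :
    ∀ (k : ℕ) (x : S), D x
      = (∑ i ∈ Finset.range k, γ ^ i * h (σ^[i] x)) + γ ^ k * D (σ^[k] x) := by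
  intro k
  induction k with
  | zero => intro x; simp
  | succ k ih =>
    intro x
    have h1 := ih x
    have h2 := hid (σ^[k] x)
    rw [Finset.sum_range_succ, Function.iterate_succ_apply']
    rw [h1, h2]
    ring

/-- `x` lies on a cycle of `π` (with period at most `|S|`). -/
def per (π : S → A) (x : S) : Prop :=
  ∃ k ∈ Finset.Icc 1 (Fintype.card S), (M.step π)^[k] x = x

instance (π : S → A) (x : S) : Decidable (M.per π x) :=
  decidable_of_iff (∃ k ∈ Finset.Icc 1 (Fintype.card S), (M.step π)^[k] x = x) Iff.rfl

/-- Every orbit reaches a periodic point in fewer than `|S|` steps. -/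
lemma exists_per_iterate [Nonempty S] (π : S → A) (x : S) :
    ∃ i, i < Fintype.card S ∧ M.per π ((M.step π)^[i] x) := by
  have hcard : Fintype.card S < Fintype.card (Fin (Fintype.card S + 1)) := by simp
  obtain ⟨i, j, hne, heq⟩ := Fintype.exists_ne_map_eq_of_card_lt
    (fun i : Fin (Fintype.card S + 1) => (M.step π)^[(i : ℕ)] x) hcard
  have key : ∀ (a b : ℕ), a < b → b ≤ Fintype.card S →
      (M.step π)^[a] x = (M.step π)^[b] x →
      ∃ i, i < Fintype.card S ∧ M.per π ((M.step π)^[i] x) := by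
    intro a b hab hb he
    refine ⟨a, lt_of_lt_of_le hab hb, b - a, Finset.mem_Icc.mpr ⟨by omega, by omega⟩, ?_⟩
    rw [← Function.iterate_add_apply]
    rw [show b - a + a = b by omega]
    exact he.symm
  rcases lt_or_gt_of_ne (fun h : (i:ℕ) = (j:ℕ) => hne (Fin.ext h)) with h | h
  · exact key i j h (Nat.lt_succ_iff.mp j.isLt) heq
  · exact key j i h (Nat.lt_succ_iff.mp i.isLt) heq.symm

lemma per_exists_aux [Nonempty S] (π : S → A) (x : S) :
    ∃ i, M.per π ((M.step π)^[i] x) := by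
  obtain ⟨i, -, h⟩ := M.exists_per_iterate π x
  exact ⟨i, h⟩

/-- The first time the orbit of `x` under `π` hits a cycle. -/
noncomputable def hitTime [Nonempty S] (π : S → A) (x : S) : ℕ :=
  Nat.find (M.per_exists_aux π x)

lemma hitTime_lt_card [Nonempty S] (π : S → A) (x : S) :
    M.hitTime π x < Fintype.card S := by
  obtain ⟨i, hi, h⟩ := M.exists_per_iterate π x
  exact lt_of_le_of_lt (Nat.find_min' _ h) hi

lemma per_hitTime [Nonempty S] (π : S → A) (x : S) :
    M.per π ((M.step π)^[M.hitTime π x] x) := Nat.find_spec (M.per_exists_aux π x)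

lemma not_per_of_lt_hitTime [Nonempty S] {π : S → A} {x : S} {i : ℕ}
    (h : i < M.hitTime π x) : ¬ M.per π ((M.step π)^[i] x) :=
  Nat.find_min (M.per_exists_aux π x) h

lemma hitTime_eq_zero [Nonempty S] {π : S → A} {x : S} (h : M.per π x) :
    M.hitTime π x = 0 := by
  rw [hitTime, Nat.find_eq_zero]
  simpa using h

/-- The cycle (as an action set) through a periodic point. -/
def cyc (π : S → A) (x : S) : Finset A :=
  (Finset.range (Fintype.card S)).image fun i => π ((M.step π)^[i] x)

lemma isCycleOf_cyc {π : S → A} {x : S} (h : M.per π x) :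
    M.IsCycleOf π (M.cyc π x) := by
  obtain ⟨k, h1, h3⟩ := h
  exact ⟨x, ⟨k, h1, h3⟩, rfl⟩

lemma mem_cyc_self [Nonempty S] (π : S → A) (x : S) : π x ∈ M.cyc π x := by
  rw [cyc, Finset.mem_image]
  exact ⟨0, Finset.mem_range.mpr Fintype.card_pos, rfl⟩

lemma cycle_unique_act {π : S → A} {C : Finset A} (hπ : M.IsPolicy π)
    (hC : M.IsCycleOf π C) : ∀ a ∈ C, a = π (M.src a) := by
  obtain ⟨s, -, rfl⟩ := hC
  intro a ha
  rw [Finset.mem_image] at ha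
  obtain ⟨i, -, rfl⟩ := ha
  rw [hπ]

lemma mem_srcImage_iff {π : S → A} (hπ : M.IsPolicy π) {s x : S} :
    x ∈ ((Finset.range (Fintype.card S)).image fun i => π ((M.step π)^[i] s)).image M.src
      ↔ ∃ i < Fintype.card S, (M.step π)^[i] s = x := by
  constructor
  · intro hx
    rw [Finset.mem_image] at hx
    obtain ⟨a, ha, rfl⟩ := hx
    rw [Finset.mem_image] at ha
    obtain ⟨i, hi, rfl⟩ := ha
    exact ⟨i, Finset.mem_range.mp hi, (hπ _).symm⟩
  · rintro ⟨i, hi, rfl⟩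
    rw [Finset.mem_image]
    refine ⟨π ((M.step π)^[i] s), ?_, hπ _⟩
    rw [Finset.mem_image]
    exact ⟨i, Finset.mem_range.mpr hi, rfl⟩

lemma cycle_act {π : S → A} {C : Finset A} (hπ : M.IsPolicy π)
    (hC : M.IsCycleOf π C) :
    ∀ x ∈ C.image M.src, π x ∈ C ∧ M.step π x ∈ C.image M.src := by
  obtain ⟨s, ⟨k, hk, hper⟩, rfl⟩ := hC
  rw [Finset.mem_Icc] at hk
  intro x hx
  rw [M.mem_srcImage_iff hπ] at hx
  obtain ⟨i, hi, rfl⟩ := hx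
  constructor
  · rw [Finset.mem_image]
    exact ⟨i, Finset.mem_range.mpr hi, rfl⟩
  · rw [M.mem_srcImage_iff hπ]
    refine ⟨(i+1) % k, ?_, ?_⟩
    · exact lt_of_lt_of_le (Nat.mod_lt _ (by omega)) hk.2
    · have hp : Function.IsPeriodicPt (M.step π) k s := hper
      rw [hp.iterate_mod_apply (i+1)]
      rw [Function.iterate_succ_apply']

/-- If two policies agree on a step-closed set, their values agree there. -/
lemma val_eq_on_closed {γ : ℝ} (hγ0 : 0 ≤ γ) (hγ1 : γ < 1) {π π' : S → A}
    (T : Finset S) (hne : T.Nonempty)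
    (hcl : ∀ x ∈ T, M.step π x ∈ T) (hag : ∀ x ∈ T, π x = π' x) :
    ∀ x ∈ T, M.val γ π x = M.val γ π' x := by
  have hv := M.isValue_val hγ0 hγ1 π
  have hv' := M.isValue_val hγ0 hγ1 π'
  set D : S → ℝ := fun x => M.val γ π x - M.val γ π' x with hD
  have key : ∀ x ∈ T, D x = γ * D (M.step π x) := by
    intro x hx
    have h1 := hv x
    have h2 := hv' x
    rw [← hag x hx] at h2
    simp only [D, step]
    linarith
  obtain ⟨x₀, hx₀T, hmax⟩ := Finset.exists_max_image T (fun x => |D x|) hne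
  have h1 : |D x₀| ≤ γ * |D x₀| := by
    calc |D x₀| = γ * |D (M.step π x₀)| := by rw [key x₀ hx₀T, abs_mul, abs_of_nonneg hγ0]
      _ ≤ γ * |D x₀| := mul_le_mul_of_nonneg_left (hmax _ (hcl x₀ hx₀T)) hγ0
  have h2 : |D x₀| = 0 := by nlinarith [abs_nonneg (D x₀)]
  intro x hx
  have h3 : |D x| = 0 := le_antisymm (by have := hmax x hx; linarith) (abs_nonneg _)
  have := abs_eq_zero.mp h3
  simp only [D] at this
  linarith

/-- Two policies sharing a cycle have the same values on its states. -/
lemma val_eq_of_shared_cycle {γ : ℝ} (hγ0 : 0 ≤ γ) (hγ1 : γ < 1) {π π' : S → A}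
    (hπ : M.IsPolicy π) (hπ' : M.IsPolicy π') {C : Finset A} {y : S}
    (hC : M.IsCycleOf π C) (hC' : M.IsCycleOf π' C) (hy : y ∈ C.image M.src) :
    M.val γ π y = M.val γ π' y := by
  refine M.val_eq_on_closed hγ0 hγ1 (C.image M.src) ⟨y, hy⟩ ?_ ?_ y hy
  · intro x hx
    exact (M.cycle_act hπ hC x hx).2
  · intro x hx
    have h1 : π x ∈ C := (M.cycle_act hπ hC x hx).1
    have h2 : π' x ∈ C := (M.cycle_act hπ' hC' x hx).1
    have h3 := M.cycle_unique_act hπ hC (π' x) h2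
    rw [hπ' x] at h3
    exact h3.symm

/-- The maximal gain of a policy w.r.t. its own value vector. -/
noncomputable def gmax [Nonempty A] (γ : ℝ) (π : S → A) : ℝ :=
  (Finset.univ.image (M.gain γ (M.val γ π))).max' (Finset.univ_nonempty.image _)

lemma gain_le_gmax [Nonempty A] (γ : ℝ) (π : S → A) (b : A) :
    M.gain γ (M.val γ π) b ≤ M.gmax γ π :=
  Finset.le_max' _ _ (Finset.mem_image_of_mem _ (Finset.mem_univ b))

/-- The basic facts about a single simplex pivot. -/
lemma pivot_step [Nonempty S] [Nonempty A] {γ : ℝ} (hγ0 : 0 ≤ γ) (hγ1 : γ < 1)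
    {π π' : S → A} (hπ : M.IsPolicy π) (hπ' : M.IsPolicy π')
    (hp : M.SimplexPivot γ π π') :
    (∀ x, M.val γ π x ≤ M.val γ π' x) ∧ 0 < M.gmax γ π ∧
      (∑ x, M.val γ π x) + M.gmax γ π ≤ ∑ x, M.val γ π' x := by
  obtain ⟨v, a, hv, hpos, hmaxa, hupd⟩ := hp
  have hveq : v = M.val γ π := M.val_eq hγ0 hγ1 hv
  subst hveq
  have hgm : M.gmax γ π = M.gain γ (M.val γ π) a :=
    le_antisymm ((Finset.max'_le_iff _ _).mpr (by
      intro y hy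
      rw [Finset.mem_image] at hy
      obtain ⟨b, -, rfl⟩ := hy
      exact hmaxa b)) (M.gain_le_gmax γ π a)
  set D : S → ℝ := fun x => M.val γ π' x - M.val γ π x with hD
  have hid : ∀ x, D x = γ * D (M.step π' x) + M.gain γ (M.val γ π) (π' x) := by
    intro x
    exact M.diff_rec (M.isValue_val hγ0 hγ1 π') hπ' (M.val γ π) x
  have hh : ∀ x, 0 ≤ M.gain γ (M.val γ π) (π' x) := by
    intro x
    rw [hupd]
    by_cases hx : x = M.src a
    · rw [hx, Function.update_self]
      exact le_of_lt hpos
    · rw [Function.update_of_ne hx]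
      rw [M.gain_policy_eq_zero hπ (M.isValue_val hγ0 hγ1 π) x]
  have hDpos : ∀ x, 0 ≤ D x := rec_nonneg hγ0 hγ1 _ D _ hid hh
  refine ⟨fun x => by have := hDpos x; simp only [D] at this; linarith, ?_, ?_⟩
  · rw [hgm]; exact hpos
  · have h1 : M.gmax γ π ≤ D (M.src a) := by
      have h2 := hid (M.src a)
      have h3 : π' (M.src a) = a := by rw [hupd, Function.update_self]
      rw [h3] at h2
      have h4 := hDpos (M.step π' (M.src a))
      rw [hgm]
      nlinarith
    have h2 : D (M.src a) ≤ ∑ x, D x :=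
      Finset.single_le_sum (fun x _ => hDpos x) (Finset.mem_univ _)
    have h3 : ∑ x, D x = (∑ x, M.val γ π' x) - ∑ x, M.val γ π x := by
      rw [← Finset.sum_sub_distrib]
    linarith

open Classical in
/-- Policies all of whose cycles are cycles of `seq t`. -/
noncomputable def polSet (γ : ℝ) (seq : ℕ → S → A) (t : ℕ) : Finset (S → A) :=
  Finset.univ.filter
    (fun π => M.IsPolicy π ∧ ∀ C : Finset A, M.IsCycleOf π C → M.IsCycleOf (seq t) C)

lemma mem_polSet {γ : ℝ} {seq : ℕ → S → A} {t : ℕ} {π : S → A} :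
    π ∈ M.polSet γ seq t ↔
      M.IsPolicy π ∧ ∀ C : Finset A, M.IsCycleOf π C → M.IsCycleOf (seq t) C := by
  rw [polSet]
  simp

open Classical in
/-- The pointwise best value over the comparison class. -/
noncomputable def uval (γ : ℝ) (seq : ℕ → S → A) (t : ℕ) (x : S) : ℝ :=
  if h : (M.polSet γ seq t).Nonempty then
    ((M.polSet γ seq t).image (fun π => M.val γ π x)).max'
      (Finset.Nonempty.image h (fun π => M.val γ π x))
  else 0

lemma le_uval {γ : ℝ} {seq : ℕ → S → A} {t : ℕ} {π : S → A}
    (hπ : π ∈ M.polSet γ seq t) (x : S) : M.val γ π x ≤ M.uval γ seq t x := by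
  have h : (M.polSet γ seq t).Nonempty := ⟨π, hπ⟩
  rw [uval, dif_pos h]
  exact Finset.le_max' _ _ (Finset.mem_image_of_mem (fun π => M.val γ π x) hπ)

lemma uval_achieved {γ : ℝ} {seq : ℕ → S → A} {t : ℕ}
    (h : (M.polSet γ seq t).Nonempty) (x : S) :
    ∃ π ∈ M.polSet γ seq t, M.val γ π x = M.uval γ seq t x := by
  rw [uval, dif_pos h]
  have := Finset.max'_mem ((M.polSet γ seq t).image (fun π => M.val γ π x)) (h.image _)
  rw [Finset.mem_image] at this
  obtain ⟨π, hπ, hval⟩ := this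
  exact ⟨π, hπ, hval⟩

/-- Arithmetic of the iteration-count exponent. -/
lemma kpow_bound (n : ℕ) (hn : 2 ≤ n) :
    1 ≤ ⌈Real.log ((n:ℝ)^2) / Real.log ((n:ℝ)^2 / ((n:ℝ)^2 - 1))⌉₊ ∧
    (1 - 1/(n:ℝ)^2) ^ ⌈Real.log ((n:ℝ)^2) / Real.log ((n:ℝ)^2 / ((n:ℝ)^2 - 1))⌉₊
      ≤ 1/(n:ℝ)^2 := by
  have hn2 : (2:ℝ) ≤ (n:ℝ) := by exact_mod_cast hn
  have hx4 : 4 ≤ (n:ℝ)^2 := by nlinarith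
  have hx1 : 1 < (n:ℝ)^2 := by linarith
  have hx0 : (0:ℝ) < (n:ℝ)^2 := by linarith
  have hxm1 : (0:ℝ) < (n:ℝ)^2 - 1 := by linarith
  have hb1 : 1 < (n:ℝ)^2 / ((n:ℝ)^2 - 1) := by
    rw [lt_div_iff₀ hxm1]; linarith
  have hb0 : (0:ℝ) < (n:ℝ)^2 / ((n:ℝ)^2 - 1) := by linarith
  have hlogb : 0 < Real.log ((n:ℝ)^2 / ((n:ℝ)^2 - 1)) := Real.log_pos hb1
  have hlogx : 0 < Real.log ((n:ℝ)^2) := Real.log_pos hx1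
  have hK1 : 1 ≤ ⌈Real.log ((n:ℝ)^2) / Real.log ((n:ℝ)^2 / ((n:ℝ)^2 - 1))⌉₊ :=
    Nat.one_le_iff_ne_zero.mpr (Nat.pos_iff_ne_zero.mp
      (Nat.ceil_pos.mpr (div_pos hlogx hlogb)))
  refine ⟨hK1, ?_⟩
  set K : ℕ := ⌈Real.log ((n:ℝ)^2) / Real.log ((n:ℝ)^2 / ((n:ℝ)^2 - 1))⌉₊ with hK
  have hKb : Real.log ((n:ℝ)^2) ≤ (K:ℝ) * Real.log ((n:ℝ)^2 / ((n:ℝ)^2 - 1)) := by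
    have h1 : Real.log ((n:ℝ)^2) / Real.log ((n:ℝ)^2 / ((n:ℝ)^2 - 1)) ≤ (K:ℝ) :=
      Nat.le_ceil _
    calc Real.log ((n:ℝ)^2)
        = (Real.log ((n:ℝ)^2) / Real.log ((n:ℝ)^2 / ((n:ℝ)^2 - 1)))
            * Real.log ((n:ℝ)^2 / ((n:ℝ)^2 - 1)) := by field_simp
      _ ≤ (K:ℝ) * Real.log ((n:ℝ)^2 / ((n:ℝ)^2 - 1)) :=
          mul_le_mul_of_nonneg_right h1 hlogb.le
  have hbK : (n:ℝ)^2 ≤ ((n:ℝ)^2 / ((n:ℝ)^2 - 1)) ^ K := by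
    have h2 : Real.log ((n:ℝ)^2) ≤ Real.log (((n:ℝ)^2 / ((n:ℝ)^2 - 1)) ^ K) := by
      conv_rhs => rw [Real.log_pow]
      exact hKb
    exact (Real.log_le_log_iff hx0 (pow_pos hb0 K)).mp h2
  have hinv : 1 - 1/(n:ℝ)^2 = ((n:ℝ)^2 / ((n:ℝ)^2 - 1))⁻¹ := by
    field_simp
  rw [hinv, inv_pow, one_div]
  exact inv_anti₀ hx0 hbK

end Aux

end DetMDP

/-- Starting from any policy of the execution, within
`(m+n)·⌈log_{n²/(n²−1)} n²⌉` iterations either the execution terminates or some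
iteration creates a new cycle. -/
theorem new_cycle_or_terminate
    {S A : Type} [Fintype S] [Fintype A] [DecidableEq S] [DecidableEq A]
    (M : DetMDP S A) (γ : ℝ) (hγ0 : 0 ≤ γ) (hγ1 : γ < 1)
    (seq : ℕ → S → A) (hexec : M.IsExecution γ seq) (t0 : ℕ) :
    ∃ t : ℕ, t0 ≤ t ∧
      t ≤ t0 + (Fintype.card A + Fintype.card S) *
        ⌈Real.log ((Fintype.card S : ℝ) ^ 2) /
          Real.log ((Fintype.card S : ℝ) ^ 2 / ((Fintype.card S : ℝ) ^ 2 - 1))⌉₊ ∧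
      (M.IsTerminal γ (seq t) ∨ M.NewCycleAt seq t) := by
  classical
  by_contra hcon
  obtain ⟨hpol, hstep⟩ := hexec
  set K : ℕ := ⌈Real.log ((Fintype.card S : ℝ) ^ 2) /
      Real.log ((Fintype.card S : ℝ) ^ 2 / ((Fintype.card S : ℝ) ^ 2 - 1))⌉₊ with hK
  set N : ℕ := (Fintype.card A + Fintype.card S) * K with hN
  have hcon' : ∀ t, t0 ≤ t → t ≤ t0 + N →
      ¬ M.IsTerminal γ (seq t) ∧ ¬ M.NewCycleAt seq t := by
    intro t h1 h2
    constructor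
    · intro hterm; exact hcon ⟨t, h1, h2, Or.inl hterm⟩
    · intro hnc; exact hcon ⟨t, h1, h2, Or.inr hnc⟩
  -- trivial case: no states
  rcases Nat.lt_or_ge (Fintype.card S) 1 with hS0 | hS1
  · have hSe : IsEmpty S := Fintype.card_eq_zero_iff.mp (by omega)
    refine (hcon' t0 le_rfl (by omega)).1 ⟨fun s => (hSe.false s).elim, ?_, ?_⟩
    · intro s; exact (hSe.false s).elim
    · intro a; exact (hSe.false (M.src a)).elim
  rcases Nat.lt_or_ge (Fintype.card S) 2 with hS1' | hn2
  -- case |S| = 1 : the first pivot creates a new cycle, or we are terminal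
  · have hcard1 : Fintype.card S = 1 := by omega
    haveI hSne : Nonempty S := Fintype.card_pos_iff.mp (by omega)
    haveI hsub : Subsingleton S := Fintype.card_le_one_iff_subsingleton.mp (by omega)
    rcases hstep t0 with hp | hterm
    swap
    · exact (hcon' t0 le_rfl (by omega)).1 hterm.1
    obtain ⟨v, a, hv, hpos, hmax, hupd⟩ := hp
    apply (hcon' t0 le_rfl (by omega)).2
    refine ⟨{a}, ⟨M.src a, ⟨1, ?_, ?_⟩, ?_⟩, ?_⟩
    · rw [Finset.mem_Icc]; omega
    · exact Subsingleton.elim _ _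
    · rw [hcard1, Finset.range_one, Finset.image_singleton]
      have : seq (t0+1) ((M.step (seq (t0+1)))^[0] (M.src a)) = a := by
        simp only [Function.iterate_zero, id_eq]
        rw [hupd, Function.update_self]
      rw [this]
    · rintro ⟨s, -, hCeq⟩
      rw [hcard1, Finset.range_one, Finset.image_singleton] at hCeq
      simp only [Function.iterate_zero, id_eq] at hCeq
      have hCeq' : a = seq t0 s := Finset.singleton_injective hCeq
      have hs : s = M.src a := Subsingleton.elim _ _
      have h0 : M.gain γ v (seq t0 (M.src a)) = 0 :=
        M.gain_policy_eq_zero (hpol t0) hv (M.src a)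
      rw [← hs, ← hCeq'] at h0
      linarith
  -- main case : |S| ≥ 2
  haveI hSne : Nonempty S := Fintype.card_pos_iff.mp (by omega)
  haveI hAne : Nonempty A := ⟨(M.exists_action (Classical.arbitrary S)).choose⟩
  have hpiv : ∀ τ, t0 ≤ τ → τ ≤ t0 + N → M.SimplexPivot γ (seq τ) (seq (τ+1)) := by
    intro τ h1 h2
    rcases hstep τ with h | h
    · exact h
    · exact absurd h.1 (hcon' τ h1 h2).1
  have hnc : ∀ τ, t0 ≤ τ → τ ≤ t0 + N →
      ∀ C, M.IsCycleOf (seq (τ+1)) C → M.IsCycleOf (seq τ) C := by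
    intro τ h1 h2 C hC
    by_contra hC0
    exact (hcon' τ h1 h2).2 ⟨C, hC, hC0⟩
  have hstep1 : ∀ τ, t0 ≤ τ → τ ≤ t0 + N →
      (∀ x, M.val γ (seq τ) x ≤ M.val γ (seq (τ+1)) x) ∧ 0 < M.gmax γ (seq τ) ∧
        (∑ x, M.val γ (seq τ) x) + M.gmax γ (seq τ) ≤ ∑ x, M.val γ (seq (τ+1)) x :=
    fun τ h1 h2 => M.pivot_step hγ0 hγ1 (hpol τ) (hpol (τ+1)) (hpiv τ h1 h2)
  have mono : ∀ t k, t0 ≤ t → t + k ≤ t0 + N + 1 →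
      ∀ x, M.val γ (seq t) x ≤ M.val γ (seq (t+k)) x := by
    intro t k h1
    induction k with
    | zero => intro _ x; exact le_rfl
    | succ k ih =>
      intro h2 x
      exact le_trans (ih (by omega) x) ((hstep1 (t+k) (by omega) (by omega)).1 x)
  have mono' : ∀ t t', t0 ≤ t → t ≤ t' → t' ≤ t0 + N + 1 →
      ∀ x, M.val γ (seq t) x ≤ M.val γ (seq t') x := by
    intro t t' h1 h2 h3 x
    have := mono t (t'-t) h1 (by omega) x
    rwa [show t + (t'-t) = t' by omega] at this
  have chain : ∀ t t', t0 ≤ t → t ≤ t' → t' ≤ t0 + N + 1 →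
      ∀ C, M.IsCycleOf (seq t') C → M.IsCycleOf (seq t) C := by
    intro t t' h1 h2 h3
    have key : ∀ k, t + k ≤ t0 + N + 1 →
        ∀ C, M.IsCycleOf (seq (t+k)) C → M.IsCycleOf (seq t) C := by
      intro k
      induction k with
      | zero => intro _ C hC; exact hC
      | succ k ih =>
        intro h4 C hC
        exact ih (by omega) C (hnc (t+k) (by omega) (by omega) C hC)
    intro C hC
    have := key (t'-t) (by omega) C (by rwa [show t + (t'-t) = t' by omega])
    exact this
  have memPol : ∀ t t', t0 ≤ t → t ≤ t' → t' ≤ t0 + N + 1 →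
      seq t' ∈ M.polSet γ seq t := by
    intro t t' h1 h2 h3
    rw [M.mem_polSet]
    exact ⟨hpol t', fun C hC => chain t t' h1 h2 h3 C hC⟩
  have hule : ∀ t t', t0 ≤ t → t ≤ t' → t' ≤ t0 + N + 1 →
      ∀ x, M.val γ (seq t') x ≤ M.uval γ seq t x :=
    fun t t' h1 h2 h3 x => M.le_uval (memPol t t' h1 h2 h3) x
  have hnR : (2:ℝ) ≤ (Fintype.card S : ℝ) := by exact_mod_cast hn2
  have hn2pos : (0:ℝ) < (Fintype.card S : ℝ)^2 := by positivity
  have hρ0 : (0:ℝ) ≤ 1 - 1/(Fintype.card S : ℝ)^2 := by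
    have : 1/(Fintype.card S : ℝ)^2 ≤ 1 := by
      rw [div_le_one hn2pos]; nlinarith
    linarith
  have hρ1 : 1 - 1/(Fintype.card S : ℝ)^2 ≤ 1 := by
    have : 0 ≤ 1/(Fintype.card S : ℝ)^2 := by positivity
    linarith
  -- pointwise comparison bound
  have ptw : ∀ t s, t0 ≤ t → t ≤ s → s ≤ t0 + N → ∀ x,
      M.uval γ seq t x - M.val γ (seq s) x ≤ (Fintype.card S : ℝ) * M.gmax γ (seq s) := by
    intro t s h1 h2 h3 x
    obtain ⟨π₁, hπ₁, hπ₁x⟩ := M.uval_achieved ⟨seq t, memPol t t h1 le_rfl (by omega)⟩ x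
    have hπ₁pol : M.IsPolicy π₁ := (M.mem_polSet.mp hπ₁).1
    have hπ₁cyc := (M.mem_polSet.mp hπ₁).2
    have hid : ∀ z, M.val γ π₁ z - M.val γ (seq s) z =
        γ * (M.val γ π₁ (M.step π₁ z) - M.val γ (seq s) (M.step π₁ z)) +
          M.gain γ (M.val γ (seq s)) (π₁ z) :=
      fun z => M.diff_rec (M.isValue_val hγ0 hγ1 π₁) hπ₁pol (M.val γ (seq s)) z
    have hunf := DetMDP.rec_unfold (M.step π₁) (fun z => M.val γ π₁ z - M.val γ (seq s) z)
      (fun z => M.gain γ (M.val γ (seq s)) (π₁ z)) hid (M.hitTime π₁ x) x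
    have hdlt : M.hitTime π₁ x < Fintype.card S := M.hitTime_lt_card π₁ x
    have hper := M.per_hitTime π₁ x
    have hctail : M.val γ π₁ ((M.step π₁)^[M.hitTime π₁ x] x)
        ≤ M.val γ (seq s) ((M.step π₁)^[M.hitTime π₁ x] x) := by
      have hCy := M.isCycleOf_cyc hper
      have hCt : M.IsCycleOf (seq t) (M.cyc π₁ ((M.step π₁)^[M.hitTime π₁ x] x)) :=
        hπ₁cyc _ hCy
      have hyy : (M.step π₁)^[M.hitTime π₁ x] x
          ∈ (M.cyc π₁ ((M.step π₁)^[M.hitTime π₁ x] x)).image M.src := by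
        rw [Finset.mem_image]
        exact ⟨π₁ _, M.mem_cyc_self π₁ _, hπ₁pol _⟩
      have heq := M.val_eq_of_shared_cycle hγ0 hγ1 hπ₁pol (hpol t) hCy hCt hyy
      rw [heq]
      exact mono' t s h1 h2 (by omega) _
    have hgpos : 0 < M.gmax γ (seq s) := (hstep1 s (by omega) h3).2.1
    have hterm : ∀ i ∈ Finset.range (M.hitTime π₁ x),
        γ^i * M.gain γ (M.val γ (seq s)) (π₁ ((M.step π₁)^[i] x)) ≤ M.gmax γ (seq s) := by
      intro i _
      have hb := M.gain_le_gmax γ (seq s) (π₁ ((M.step π₁)^[i] x))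
      rcases le_or_gt (M.gain γ (M.val γ (seq s)) (π₁ ((M.step π₁)^[i] x))) 0 with h4 | h4
      · have := mul_nonpos_of_nonneg_of_nonpos (pow_nonneg hγ0 i) h4
        linarith
      · have h5 := mul_le_mul_of_nonneg_right (pow_le_one₀ hγ0 hγ1.le (n := i)) h4.le
        rw [one_mul] at h5
        linarith
    have hsumb : ∑ i ∈ Finset.range (M.hitTime π₁ x),
        γ^i * M.gain γ (M.val γ (seq s)) (π₁ ((M.step π₁)^[i] x))
          ≤ (M.hitTime π₁ x : ℝ) * M.gmax γ (seq s) := by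
      calc ∑ i ∈ Finset.range (M.hitTime π₁ x),
            γ^i * M.gain γ (M.val γ (seq s)) (π₁ ((M.step π₁)^[i] x))
          ≤ ∑ _i ∈ Finset.range (M.hitTime π₁ x), M.gmax γ (seq s) :=
            Finset.sum_le_sum hterm
        _ = (M.hitTime π₁ x : ℝ) * M.gmax γ (seq s) := by
            rw [Finset.sum_const, Finset.card_range, nsmul_eq_mul]
    have htail : γ^(M.hitTime π₁ x) *
        (M.val γ π₁ ((M.step π₁)^[M.hitTime π₁ x] x) -
          M.val γ (seq s) ((M.step π₁)^[M.hitTime π₁ x] x)) ≤ 0 :=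
      mul_nonpos_of_nonneg_of_nonpos (pow_nonneg hγ0 _) (by linarith)
    have hdn : (M.hitTime π₁ x : ℝ) ≤ (Fintype.card S : ℝ) := by
      exact_mod_cast hdlt.le
    calc M.uval γ seq t x - M.val γ (seq s) x
        = M.val γ π₁ x - M.val γ (seq s) x := by rw [hπ₁x]
      _ = (∑ i ∈ Finset.range (M.hitTime π₁ x),
            γ^i * M.gain γ (M.val γ (seq s)) (π₁ ((M.step π₁)^[i] x))) +
          γ^(M.hitTime π₁ x) *
            (M.val γ π₁ ((M.step π₁)^[M.hitTime π₁ x] x) -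
              M.val γ (seq s) ((M.step π₁)^[M.hitTime π₁ x] x)) := hunf
      _ ≤ (M.hitTime π₁ x : ℝ) * M.gmax γ (seq s) + 0 := by
          exact add_le_add hsumb htail
      _ ≤ (Fintype.card S : ℝ) * M.gmax γ (seq s) := by
          rw [add_zero]
          exact mul_le_mul_of_nonneg_right hdn hgpos.le
  -- summed comparison bound
  have psile : ∀ t s, t0 ≤ t → t ≤ s → s ≤ t0 + N →
      (∑ x, (M.uval γ seq t x - M.val γ (seq s) x))
        ≤ (Fintype.card S : ℝ)^2 * M.gmax γ (seq s) := by
    intro t s h1 h2 h3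
    have hgpos : 0 < M.gmax γ (seq s) := (hstep1 s (by omega) h3).2.1
    calc ∑ x, (M.uval γ seq t x - M.val γ (seq s) x)
        ≤ ∑ _x : S, (Fintype.card S : ℝ) * M.gmax γ (seq s) :=
          Finset.sum_le_sum (fun x _ => ptw t s h1 h2 h3 x)
      _ = (Fintype.card S : ℝ) * ((Fintype.card S : ℝ) * M.gmax γ (seq s)) := by
          rw [Finset.sum_const, Finset.card_univ, nsmul_eq_mul]
      _ = (Fintype.card S : ℝ)^2 * M.gmax γ (seq s) := by ring
  -- geometric decay
  have dec : ∀ t, t0 ≤ t → ∀ k, t + k ≤ t0 + N →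
      (∑ x, (M.uval γ seq t x - M.val γ (seq (t+k)) x))
        ≤ (1 - 1/(Fintype.card S : ℝ)^2)^k * (∑ x, (M.uval γ seq t x - M.val γ (seq t) x)) := by
    intro t h1 k
    induction k with
    | zero => intro _; simp
    | succ k ih =>
      intro h2
      have h3 : t + k ≤ t0 + N := by omega
      have ihh := ih (by omega)
      have hstepk := (hstep1 (t+k) (by omega) h3).2.2
      have e1 : ∑ x, (M.uval γ seq t x - M.val γ (seq (t+k+1)) x)
          = (∑ x, M.uval γ seq t x) - ∑ x, M.val γ (seq (t+k+1)) x :=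
        Finset.sum_sub_distrib _ _
      have e2 : ∑ x, (M.uval γ seq t x - M.val γ (seq (t+k)) x)
          = (∑ x, M.uval γ seq t x) - ∑ x, M.val γ (seq (t+k)) x :=
        Finset.sum_sub_distrib _ _
      have hA : ∑ x, (M.uval γ seq t x - M.val γ (seq (t+k+1)) x)
          ≤ (∑ x, (M.uval γ seq t x - M.val γ (seq (t+k)) x)) - M.gmax γ (seq (t+k)) := by
        rw [e1, e2]; linarith
      have hB := psile t (t+k) h1 (by omega) h3
      have h4 : (1/(Fintype.card S : ℝ)^2) * (∑ x, (M.uval γ seq t x - M.val γ (seq (t+k)) x))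
          ≤ M.gmax γ (seq (t+k)) := by
        calc (1/(Fintype.card S : ℝ)^2) * (∑ x, (M.uval γ seq t x - M.val γ (seq (t+k)) x))
            ≤ (1/(Fintype.card S : ℝ)^2) *
                ((Fintype.card S : ℝ)^2 * M.gmax γ (seq (t+k))) :=
              mul_le_mul_of_nonneg_left hB (by positivity)
          _ = M.gmax γ (seq (t+k)) := by field_simp
      have hC : ∑ x, (M.uval γ seq t x - M.val γ (seq (t+k+1)) x)
          ≤ (1 - 1/(Fintype.card S : ℝ)^2) *
              (∑ x, (M.uval γ seq t x - M.val γ (seq (t+k)) x)) := by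
        have expand : (1 - 1/(Fintype.card S : ℝ)^2) *
            (∑ x, (M.uval γ seq t x - M.val γ (seq (t+k)) x))
            = (∑ x, (M.uval γ seq t x - M.val γ (seq (t+k)) x)) -
              (1/(Fintype.card S : ℝ)^2) * (∑ x, (M.uval γ seq t x - M.val γ (seq (t+k)) x)) := by
          ring
        rw [expand]; linarith
      calc ∑ x, (M.uval γ seq t x - M.val γ (seq (t+k+1)) x)
          ≤ (1 - 1/(Fintype.card S : ℝ)^2) *
              (∑ x, (M.uval γ seq t x - M.val γ (seq (t+k)) x)) := hC
        _ ≤ (1 - 1/(Fintype.card S : ℝ)^2) *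
              ((1 - 1/(Fintype.card S : ℝ)^2)^k *
                (∑ x, (M.uval γ seq t x - M.val γ (seq t) x))) :=
            mul_le_mul_of_nonneg_left ihh hρ0
        _ = (1 - 1/(Fintype.card S : ℝ)^2)^(k+1) *
              (∑ x, (M.uval γ seq t x - M.val γ (seq t) x)) := by ring
  -- positivity of the potential
  have hpsipos : ∀ t, t0 ≤ t → t ≤ t0 + N →
      0 < ∑ x, (M.uval γ seq t x - M.val γ (seq t) x) := by
    intro t h1 h2
    have h5 := (hstep1 t h1 h2).2.2
    have hg := (hstep1 t h1 h2).2.1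
    have h6 : ∀ x, M.val γ (seq (t+1)) x ≤ M.uval γ seq t x :=
      hule t (t+1) h1 (by omega) (by omega)
    have h7 : ∑ x, M.val γ (seq (t+1)) x ≤ ∑ x, M.uval γ seq t x :=
      Finset.sum_le_sum (fun x _ => h6 x)
    have e1 : ∑ x, (M.uval γ seq t x - M.val γ (seq t) x)
        = (∑ x, M.uval γ seq t x) - ∑ x, M.val γ (seq t) x := Finset.sum_sub_distrib _ _
    rw [e1]; linarith
  have kpow := DetMDP.kpow_bound (Fintype.card S) hn2
  have hK1 : 1 ≤ K := by rw [hK]; exact kpow.1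
  -- the certificate lemma
  have cert : ∀ t, t0 ≤ t → t ≤ t0 + N → ∃ o : A ⊕ S,
      Sum.elim (fun a => seq t (M.src a) = a) (fun y => M.per (seq t) y) o ∧
      ∀ t', t + K ≤ t' → t' ≤ t0 + N →
        ¬ Sum.elim (fun a => seq t' (M.src a) = a) (fun y => M.per (seq t') y) o := by
    intro t h1 h2
    have hD0 : ∀ x, 0 ≤ M.uval γ seq t x - M.val γ (seq t) x := by
      intro x
      have := hule t t h1 le_rfl (by omega) x
      linarith
    have hΨpos : 0 < ∑ x, (M.uval γ seq t x - M.val γ (seq t) x) := hpsipos t h1 h2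
    -- future decayed bound
    have hfut : ∀ t', t + K ≤ t' → t' ≤ t0 + N → ∀ x,
        M.uval γ seq t x - M.val γ (seq t') x
          ≤ (∑ z, (M.uval γ seq t z - M.val γ (seq t) z)) / (Fintype.card S : ℝ)^2 := by
      intro t' hk1 hk2 x
      have h3 : ∀ y, 0 ≤ M.uval γ seq t y - M.val γ (seq t') y := by
        intro y
        have := hule t t' h1 (by omega) (by omega) y
        linarith
      have h4 : M.uval γ seq t x - M.val γ (seq t') x
          ≤ ∑ y, (M.uval γ seq t y - M.val γ (seq t') y) :=
        Finset.single_le_sum (fun y _ => h3 y) (Finset.mem_univ x)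
      have h5 : ∑ y, (M.uval γ seq t y - M.val γ (seq t') y)
          ≤ (1 - 1/(Fintype.card S : ℝ)^2)^(t'-t) *
              (∑ z, (M.uval γ seq t z - M.val γ (seq t) z)) := by
        have := dec t h1 (t'-t) (by omega)
        rwa [show t + (t'-t) = t' by omega] at this
      have h6 : (1 - 1/(Fintype.card S : ℝ)^2)^(t'-t)
          ≤ (1 - 1/(Fintype.card S : ℝ)^2)^K :=
        pow_le_pow_of_le_one hρ0 hρ1 (by omega)
      have h8 : (1 - 1/(Fintype.card S : ℝ)^2)^K ≤ 1/(Fintype.card S : ℝ)^2 := by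
        rw [hK]; exact kpow.2
      have h7 : (1 - 1/(Fintype.card S : ℝ)^2)^(t'-t) *
            (∑ z, (M.uval γ seq t z - M.val γ (seq t) z))
          ≤ (1/(Fintype.card S : ℝ)^2) * (∑ z, (M.uval γ seq t z - M.val γ (seq t) z)) :=
        mul_le_mul_of_nonneg_right (le_trans h6 h8) hΨpos.le
      calc M.uval γ seq t x - M.val γ (seq t') x
          ≤ ∑ y, (M.uval γ seq t y - M.val γ (seq t') y) := h4
        _ ≤ (1 - 1/(Fintype.card S : ℝ)^2)^(t'-t) *
              (∑ z, (M.uval γ seq t z - M.val γ (seq t) z)) := h5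
        _ ≤ (1/(Fintype.card S : ℝ)^2) * (∑ z, (M.uval γ seq t z - M.val γ (seq t) z)) := h7
        _ = (∑ z, (M.uval γ seq t z - M.val γ (seq t) z)) / (Fintype.card S : ℝ)^2 := by
            ring
    -- recursion identity for the potential
    have hid : ∀ x, M.uval γ seq t x - M.val γ (seq t) x
        = γ * (M.uval γ seq t (M.step (seq t) x) - M.val γ (seq t) (M.step (seq t) x)) +
          (- M.gain γ (M.uval γ seq t) (seq t x)) := by
      intro x
      have h3 := M.diff_rec (M.isValue_val hγ0 hγ1 (seq t)) (hpol t) (M.uval γ seq t) x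
      linarith
    -- the two maxima
    have hperFne : (Finset.univ.filter (fun x => M.per (seq t) x)).Nonempty := by
      obtain ⟨i, -, hp⟩ := M.exists_per_iterate (seq t) (Classical.arbitrary S)
      exact ⟨_, Finset.mem_filter.mpr ⟨Finset.mem_univ _, hp⟩⟩
    set treeF : Finset S := Finset.univ.filter (fun x => ¬ M.per (seq t) x) with htreeF
    set perF : Finset S := Finset.univ.filter (fun x => M.per (seq t) x) with hperF
    set mbar : ℝ := (insert (0:ℝ)
        (treeF.image (fun x => - M.gain γ (M.uval γ seq t) (seq t x)))).max'
        (Finset.insert_nonempty _ _) with hmbar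
    set cbar : ℝ := (perF.image (fun x => M.uval γ seq t x - M.val γ (seq t) x)).max'
        (Finset.Nonempty.image hperFne (fun x => M.uval γ seq t x - M.val γ (seq t) x))
        with hcbar
    have hmbar0 : 0 ≤ mbar := Finset.le_max' _ _ (Finset.mem_insert_self _ _)
    have hmbarle : ∀ x ∈ treeF, - M.gain γ (M.uval γ seq t) (seq t x) ≤ mbar := by
      intro x hx
      exact Finset.le_max' _ _ (Finset.mem_insert_of_mem
        (Finset.mem_image_of_mem (fun x => - M.gain γ (M.uval γ seq t) (seq t x)) hx))
    have hcbarle : ∀ x ∈ perF, M.uval γ seq t x - M.val γ (seq t) x ≤ cbar := by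
      intro x hx
      exact Finset.le_max' _ _
        (Finset.mem_image_of_mem (fun x => M.uval γ seq t x - M.val γ (seq t) x) hx)
    have hcbar0 : 0 ≤ cbar := by
      obtain ⟨y, hy⟩ := hperFne
      exact le_trans (hD0 y) (hcbarle y hy)
    -- per-state decomposition bound
    have hDle : ∀ x, M.uval γ seq t x - M.val γ (seq t) x
        ≤ (M.hitTime (seq t) x : ℝ) * mbar + cbar := by
      intro x
      have hunf := DetMDP.rec_unfold (M.step (seq t))
        (fun z => M.uval γ seq t z - M.val γ (seq t) z)
        (fun z => - M.gain γ (M.uval γ seq t) (seq t z)) hid (M.hitTime (seq t) x) x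
      have htail : γ ^ (M.hitTime (seq t) x) *
          (M.uval γ seq t ((M.step (seq t))^[M.hitTime (seq t) x] x) -
            M.val γ (seq t) ((M.step (seq t))^[M.hitTime (seq t) x] x)) ≤ cbar := by
        have hpy := M.per_hitTime (seq t) x
        have h4 := hcbarle ((M.step (seq t))^[M.hitTime (seq t) x] x)
          (Finset.mem_filter.mpr ⟨Finset.mem_univ _, hpy⟩)
        have h5 := mul_le_mul_of_nonneg_right
          (pow_le_one₀ hγ0 hγ1.le (n := M.hitTime (seq t) x))
          (hD0 ((M.step (seq t))^[M.hitTime (seq t) x] x))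
        rw [one_mul] at h5
        exact le_trans h5 h4
      have hsum : ∑ i ∈ Finset.range (M.hitTime (seq t) x),
          γ^i * (- M.gain γ (M.uval γ seq t) (seq t ((M.step (seq t))^[i] x)))
            ≤ (M.hitTime (seq t) x : ℝ) * mbar := by
        have h6 : ∀ i ∈ Finset.range (M.hitTime (seq t) x),
            γ^i * (- M.gain γ (M.uval γ seq t) (seq t ((M.step (seq t))^[i] x))) ≤ mbar := by
          intro i hi
          have h7 : (M.step (seq t))^[i] x ∈ treeF :=
            Finset.mem_filter.mpr ⟨Finset.mem_univ _,
              M.not_per_of_lt_hitTime (Finset.mem_range.mp hi)⟩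
          have h8 := hmbarle _ h7
          rcases le_or_gt (- M.gain γ (M.uval γ seq t) (seq t ((M.step (seq t))^[i] x))) 0
            with h9 | h9
          · have := mul_nonpos_of_nonneg_of_nonpos (pow_nonneg hγ0 i) h9
            linarith
          · have h10 := mul_le_mul_of_nonneg_right (pow_le_one₀ hγ0 hγ1.le (n := i)) h9.le
            rw [one_mul] at h10
            linarith
        calc ∑ i ∈ Finset.range (M.hitTime (seq t) x),
              γ^i * (- M.gain γ (M.uval γ seq t) (seq t ((M.step (seq t))^[i] x)))
            ≤ ∑ _i ∈ Finset.range (M.hitTime (seq t) x), mbar := Finset.sum_le_sum h6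
          _ = (M.hitTime (seq t) x : ℝ) * mbar := by
              rw [Finset.sum_const, Finset.card_range, nsmul_eq_mul]
      rw [hunf]
      exact add_le_add hsum htail
    -- counting the tree visits
    have hddle : ∀ x : S, M.hitTime (seq t) x ≤ Fintype.card S - 1 := by
      intro x
      have := M.hitTime_lt_card (seq t) x
      omega
    have hdd0 : ∀ x ∈ perF, M.hitTime (seq t) x = 0 := by
      intro x hx
      exact M.hitTime_eq_zero (Finset.mem_filter.mp hx).2
    have htreecard : treeF.card ≤ Fintype.card S - 1 := by
      have h11 : perF.card + treeF.card = Fintype.card S := by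
        rw [hperF, htreeF]
        rw [Finset.card_filter_add_card_filter_not]
        exact Finset.card_univ
      have h12 : 0 < perF.card := Finset.Nonempty.card_pos hperFne
      omega
    have hddsum : ∑ x, M.hitTime (seq t) x ≤ (Fintype.card S - 1)^2 := by
      have h13 : ∑ x, M.hitTime (seq t) x
          = (∑ x ∈ perF, M.hitTime (seq t) x) + ∑ x ∈ treeF, M.hitTime (seq t) x := by
        rw [hperF, htreeF]
        exact (Finset.sum_filter_add_sum_filter_not Finset.univ _ _).symm
      have h14 : ∑ x ∈ perF, M.hitTime (seq t) x = 0 :=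
        Finset.sum_eq_zero hdd0
      have h15 : ∑ x ∈ treeF, M.hitTime (seq t) x ≤ treeF.card * (Fintype.card S - 1) :=
        Finset.sum_le_card_nsmul treeF _ _ (fun x _ => hddle x)
      have h16 : treeF.card * (Fintype.card S - 1) ≤ (Fintype.card S - 1) * (Fintype.card S - 1) :=
        Nat.mul_le_mul_right _ htreecard
      calc ∑ x, M.hitTime (seq t) x
          = ∑ x ∈ treeF, M.hitTime (seq t) x := by rw [h13, h14, zero_add]
        _ ≤ treeF.card * (Fintype.card S - 1) := h15
        _ ≤ (Fintype.card S - 1) * (Fintype.card S - 1) := h16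
        _ = (Fintype.card S - 1)^2 := (sq _).symm
    -- summed bound
    have hΨle : (∑ x, (M.uval γ seq t x - M.val γ (seq t) x))
        ≤ ((Fintype.card S - 1 : ℕ) : ℝ)^2 * mbar + (Fintype.card S : ℝ) * cbar := by
      have h17 : (∑ x, (M.uval γ seq t x - M.val γ (seq t) x))
          ≤ ∑ x, ((M.hitTime (seq t) x : ℝ) * mbar + cbar) :=
        Finset.sum_le_sum (fun x _ => hDle x)
      have h18 : ∑ x, ((M.hitTime (seq t) x : ℝ) * mbar + cbar)
          = (∑ x, (M.hitTime (seq t) x : ℝ)) * mbar + (Fintype.card S : ℝ) * cbar := by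
        rw [Finset.sum_add_distrib, Finset.sum_const, Finset.card_univ, nsmul_eq_mul,
          ← Finset.sum_mul]
      have h19 : (∑ x, (M.hitTime (seq t) x : ℝ)) ≤ ((Fintype.card S - 1 : ℕ) : ℝ)^2 := by
        have := hddsum
        have h20 : ((∑ x, M.hitTime (seq t) x : ℕ) : ℝ) ≤ (((Fintype.card S - 1)^2 : ℕ) : ℝ) := by
          exact_mod_cast this
        rw [Nat.cast_sum] at h20
        rw [Nat.cast_pow] at h20
        exact h20
      have h21 : (∑ x, (M.hitTime (seq t) x : ℝ)) * mbar
          ≤ ((Fintype.card S - 1 : ℕ) : ℝ)^2 * mbar :=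
        mul_le_mul_of_nonneg_right h19 hmbar0
      calc (∑ x, (M.uval γ seq t x - M.val γ (seq t) x))
          ≤ ∑ x, ((M.hitTime (seq t) x : ℝ) * mbar + cbar) := h17
        _ = (∑ x, (M.hitTime (seq t) x : ℝ)) * mbar + (Fintype.card S : ℝ) * cbar := h18
        _ ≤ ((Fintype.card S - 1 : ℕ) : ℝ)^2 * mbar + (Fintype.card S : ℝ) * cbar := by
            linarith
    -- the margin
    have hM : (∑ x, (M.uval γ seq t x - M.val γ (seq t) x)) / (Fintype.card S : ℝ)^2
        < max mbar cbar := by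
      have hcast : ((Fintype.card S - 1 : ℕ) : ℝ) = (Fintype.card S : ℝ) - 1 := by
        have : (1:ℕ) ≤ Fintype.card S := by omega
        push_cast [this]
        ring
      have h22 : (∑ x, (M.uval γ seq t x - M.val γ (seq t) x))
          ≤ (((Fintype.card S : ℝ) - 1)^2 + (Fintype.card S : ℝ)) * max mbar cbar := by
        have ha : ((Fintype.card S - 1 : ℕ) : ℝ)^2 * mbar
            ≤ ((Fintype.card S : ℝ) - 1)^2 * max mbar cbar := by
          rw [hcast]
          apply mul_le_mul_of_nonneg_left (le_max_left _ _)
          positivity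
        have hb : (Fintype.card S : ℝ) * cbar ≤ (Fintype.card S : ℝ) * max mbar cbar := by
          apply mul_le_mul_of_nonneg_left (le_max_right _ _)
          positivity
        calc (∑ x, (M.uval γ seq t x - M.val γ (seq t) x))
            ≤ ((Fintype.card S - 1 : ℕ) : ℝ)^2 * mbar + (Fintype.card S : ℝ) * cbar := hΨle
          _ ≤ ((Fintype.card S : ℝ) - 1)^2 * max mbar cbar
              + (Fintype.card S : ℝ) * max mbar cbar := add_le_add ha hb
          _ = (((Fintype.card S : ℝ) - 1)^2 + (Fintype.card S : ℝ)) * max mbar cbar := by ring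
      have h23 : (((Fintype.card S : ℝ) - 1)^2 + (Fintype.card S : ℝ)) < (Fintype.card S : ℝ)^2 := by
        nlinarith
      have hmaxpos : 0 < max mbar cbar := by
        by_contra hle
        push_neg at hle
        have h24 : (((Fintype.card S : ℝ) - 1)^2 + (Fintype.card S : ℝ)) * max mbar cbar ≤ 0 :=
          mul_nonpos_of_nonneg_of_nonpos (by nlinarith) hle
        linarith
      rw [div_lt_iff₀ hn2pos]
      calc (∑ x, (M.uval γ seq t x - M.val γ (seq t) x))
          ≤ (((Fintype.card S : ℝ) - 1)^2 + (Fintype.card S : ℝ)) * max mbar cbar := h22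
        _ < (Fintype.card S : ℝ)^2 * max mbar cbar := mul_lt_mul_of_pos_right h23 hmaxpos
        _ = max mbar cbar * (Fintype.card S : ℝ)^2 := by ring
    rcases le_or_gt cbar mbar with hcase | hcase
    · -- tree certificate
      rw [max_eq_left hcase] at hM
      have hex : ∃ y ∈ treeF, - M.gain γ (M.uval γ seq t) (seq t y) = mbar := by
        have hmem := Finset.max'_mem (insert (0:ℝ)
          (treeF.image (fun x => - M.gain γ (M.uval γ seq t) (seq t x))))
          (Finset.insert_nonempty _ _)
        rw [← hmbar] at hmem
        rcases Finset.mem_insert.mp hmem with h14 | h14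
        · exfalso
          have h25 : 0 < (∑ x, (M.uval γ seq t x - M.val γ (seq t) x)) / (Fintype.card S : ℝ)^2 :=
            div_pos hΨpos hn2pos
          rw [h14] at hM
          linarith
        · rw [Finset.mem_image] at h14
          exact h14
      obtain ⟨y, hytree, hyh⟩ := hex
      refine ⟨Sum.inl (seq t y), ?_, ?_⟩
      · simp only [Sum.elim_inl]
        rw [hpol t y]
      · intro t' hk1 hk2 hpres
        simp only [Sum.elim_inl] at hpres
        rw [hpol t y] at hpres
        have h15 := (M.isValue_val hγ0 hγ1 (seq t')) y
        rw [hpres] at h15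
        have h16 : M.val γ (seq t') (M.tgt (seq t y)) ≤ M.uval γ seq t (M.tgt (seq t y)) :=
          hule t t' h1 (by omega) (by omega) _
        have h17 : - M.gain γ (M.uval γ seq t) (seq t y)
            = M.uval γ seq t y - M.r (seq t y) - γ * M.uval γ seq t (M.tgt (seq t y)) := by
          simp only [DetMDP.gain, hpol t y]
          ring
        have h19 : γ * M.val γ (seq t') (M.tgt (seq t y))
            ≤ γ * M.uval γ seq t (M.tgt (seq t y)) :=
          mul_le_mul_of_nonneg_left h16 hγ0
        have h18 : - M.gain γ (M.uval γ seq t) (seq t y)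
            ≤ M.uval γ seq t y - M.val γ (seq t') y := by
          linarith
        have h20 := hfut t' hk1 hk2 y
        linarith
    · -- cycle certificate
      rw [max_eq_right hcase.le] at hM
      have hex : ∃ y ∈ perF, M.uval γ seq t y - M.val γ (seq t) y = cbar := by
        have hmem := Finset.max'_mem
          (perF.image (fun x => M.uval γ seq t x - M.val γ (seq t) x))
          (Finset.Nonempty.image hperFne (fun x => M.uval γ seq t x - M.val γ (seq t) x))
        rw [← hcbar] at hmem
        rw [Finset.mem_image] at hmem
        exact hmem
      obtain ⟨y, hyper, hyD⟩ := hex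
      have hyper' : M.per (seq t) y := (Finset.mem_filter.mp hyper).2
      refine ⟨Sum.inr y, ?_, ?_⟩
      · simpa using hyper'
      · intro t' hk1 hk2 hpres
        simp only [Sum.elim_inr] at hpres
        have hC1 := M.isCycleOf_cyc hpres
        have hC2 : M.IsCycleOf (seq t) (M.cyc (seq t') y) :=
          chain t t' h1 (by omega) (by omega) _ hC1
        have hymem : y ∈ (M.cyc (seq t') y).image M.src := by
          rw [Finset.mem_image]
          exact ⟨seq t' y, M.mem_cyc_self _ y, hpol t' y⟩
        have hveq : M.val γ (seq t') y = M.val γ (seq t) y :=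
          M.val_eq_of_shared_cycle hγ0 hγ1 (hpol t') (hpol t) hC1 hC2 hymem
        have h20 := hfut t' hk1 hk2 y
        rw [hveq] at h20
        linarith
  -- the counting argument
  have certj : ∀ j : Fin (Fintype.card A + Fintype.card S + 1), ∃ o : A ⊕ S,
      Sum.elim (fun a => seq (t0 + (j:ℕ)*K) (M.src a) = a)
        (fun y => M.per (seq (t0 + (j:ℕ)*K)) y) o ∧
      ∀ t', t0 + (j:ℕ)*K + K ≤ t' → t' ≤ t0 + N →
        ¬ Sum.elim (fun a => seq t' (M.src a) = a) (fun y => M.per (seq t') y) o := by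
    intro j
    apply cert
    · omega
    · have h26 : (j:ℕ) ≤ Fintype.card A + Fintype.card S := by
        have := j.isLt
        omega
      have h27 : (j:ℕ) * K ≤ (Fintype.card A + Fintype.card S) * K :=
        Nat.mul_le_mul_right K h26
      omega
  have hinj : Function.Injective (fun j => (certj j).choose) := by
    intro i j hij
    by_contra hne
    simp only at hij
    have key : ∀ i j : Fin (Fintype.card A + Fintype.card S + 1),
        (i:ℕ) < (j:ℕ) → (certj i).choose = (certj j).choose → False := by
      intro i j hlt hceq
      have h28 : (j:ℕ) ≤ Fintype.card A + Fintype.card S := by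
        have := j.isLt; omega
      have h29 : (j:ℕ) * K ≤ (Fintype.card A + Fintype.card S) * K :=
        Nat.mul_le_mul_right K h28
      have h30 : ((i:ℕ)+1) * K ≤ (j:ℕ) * K := Nat.mul_le_mul_right K (by omega)
      rw [Nat.succ_mul] at h30
      have h31 := (certj j).choose_spec.1
      have h32 := (certj i).choose_spec.2 (t0 + (j:ℕ)*K) (by omega) (by omega)
      rw [hceq] at h32
      exact h32 h31
    rcases lt_or_gt_of_ne (fun h : (i:ℕ) = (j:ℕ) => hne (Fin.ext h)) with h | h
    · exact key i j h hij
    · exact key j i h hij.symm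
  have hcard := Fintype.card_le_of_injective _ hinj
  rw [Fintype.card_fin, Fintype.card_sum] at hcard
  omega
end

section
/- Suppose the simplex method with the highest-gain pivoting rule on a uniformly discounted deterministic MDP pivots from policy π to policy π', and π' contains a cycle that is not a cycle of π. Then, for any optimal policy π* with flux vector x*, r^T(x* − x^{π'}) ≤ (1 − 1/n)·r^T(x* − x^π). -/
open Finset

section Aux

open Finset

variable {S A : Type} [Fintype S] [Fintype A] [DecidableEq S] [DecidableEq A]
variable (M : DetMDP S A)

/-- The sum of the flux over actions usable at `s` equals the flux of the policy action. -/
lemma flux_fiber {γ : ℝ} {π : S → A} {x : A → ℝ}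
    (hπ : M.IsPolicy π) (hx : M.IsFlux γ π x) (s : S) :
    ∑ a ∈ univ.filter (fun a => M.src a = s), x a = x (π s) := by
  refine Finset.sum_eq_single_of_mem (π s) (mem_filter.mpr ⟨mem_univ _, hπ s⟩) ?_
  intro b hb hbne
  exact hx.1 b (fun h => hbne (by rw [h, (mem_filter.mp hb).2]))

/-- Fluxes of policies are nonnegative. -/
lemma flux_nonneg_s9 {γ : ℝ} (hγ0 : 0 ≤ γ) (hγ1 : γ < 1) {π : S → A} {x : A → ℝ}
    (hπ : M.IsPolicy π) (hx : M.IsFlux γ π x) : ∀ a, 0 ≤ x a := by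
  set m : A → ℝ := fun a => max (-x a) 0 with hm
  have hm0 : ∀ a, 0 ≤ m a := fun a => le_max_right _ _
  have hstep : ∀ s : S, m (π s) ≤ γ * ∑ a ∈ univ.filter (fun a => M.tgt a = s), m a := by
    intro s
    have h1 : x (π s) = 1 + γ * ∑ a ∈ univ.filter (fun a => M.tgt a = s), x a := by
      rw [← flux_fiber M hπ hx s]; exact hx.2 s
    have hT : -(∑ a ∈ univ.filter (fun a => M.tgt a = s), x a)
        ≤ ∑ a ∈ univ.filter (fun a => M.tgt a = s), m a := by
      rw [← Finset.sum_neg_distrib]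
      exact Finset.sum_le_sum fun a _ => le_max_left _ _
    have hTnn : (0:ℝ) ≤ ∑ a ∈ univ.filter (fun a => M.tgt a = s), m a :=
      Finset.sum_nonneg fun a _ => hm0 a
    have : m (π s) = max (-x (π s)) 0 := rfl
    rw [this, h1]
    apply max_le
    · nlinarith [mul_le_mul_of_nonneg_left hT hγ0]
    · positivity
  have hsum : ∑ a : A, m a = ∑ s : S, m (π s) := by
    rw [← Finset.sum_fiberwise univ M.src m]
    refine Finset.sum_congr rfl fun s _ => ?_
    refine Finset.sum_eq_single_of_mem (π s) (mem_filter.mpr ⟨mem_univ _, hπ s⟩) ?_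
    intro b hb hbne
    have hx0 : x b = 0 := hx.1 b (fun h => hbne (by rw [h, (mem_filter.mp hb).2]))
    simp [hm, hx0]
  have hchain : ∑ a : A, m a ≤ γ * ∑ a : A, m a := by
    calc ∑ a : A, m a = ∑ s : S, m (π s) := hsum
      _ ≤ ∑ s : S, γ * ∑ a ∈ univ.filter (fun a => M.tgt a = s), m a :=
          Finset.sum_le_sum fun s _ => hstep s
      _ = γ * ∑ s : S, ∑ a ∈ univ.filter (fun a => M.tgt a = s), m a := by
          rw [Finset.mul_sum]
      _ = γ * ∑ a : A, m a := by rw [Finset.sum_fiberwise]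
  have hNnn : (0:ℝ) ≤ ∑ a : A, m a := Finset.sum_nonneg fun a _ => hm0 a
  have hNz : ∑ a : A, m a = 0 := by nlinarith
  intro a
  have hma : m a = 0 :=
    (Finset.sum_eq_zero_iff_of_nonneg (fun a _ => hm0 a)).mp hNz a (mem_univ a)
  have := le_max_left (-x a) 0
  rw [show max (-x a) 0 = m a from rfl, hma] at this
  linarith

/-- Key LP identity: for any vector satisfying the flux equations,
the total gain equals the objective minus the total value. -/
lemma gain_sum (γ : ℝ) (v : S → ℝ) (x : A → ℝ)
    (hfe : ∀ s : S, (∑ a ∈ univ.filter fun a => M.src a = s, x a)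
      = 1 + γ * ∑ a ∈ univ.filter fun a => M.tgt a = s, x a) :
    ∑ a : A, M.gain γ v a * x a = ∑ a : A, M.r a * x a - ∑ s : S, v s := by
  have hA : ∑ a : A, v (M.src a) * x a
      = ∑ s : S, v s * ∑ a ∈ univ.filter (fun a => M.src a = s), x a := by
    rw [← Finset.sum_fiberwise univ M.src (fun a => v (M.src a) * x a)]
    refine Finset.sum_congr rfl fun s _ => ?_
    rw [Finset.mul_sum]
    exact Finset.sum_congr rfl fun a ha => by rw [(mem_filter.mp ha).2]
  have hB : ∑ a : A, v (M.tgt a) * x a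
      = ∑ s : S, v s * ∑ a ∈ univ.filter (fun a => M.tgt a = s), x a := by
    rw [← Finset.sum_fiberwise univ M.tgt (fun a => v (M.tgt a) * x a)]
    refine Finset.sum_congr rfl fun s _ => ?_
    rw [Finset.mul_sum]
    exact Finset.sum_congr rfl fun a ha => by rw [(mem_filter.mp ha).2]
  have hC : ∑ s : S, v s * ∑ a ∈ univ.filter (fun a => M.src a = s), x a
      = ∑ s : S, v s
        + γ * ∑ s : S, v s * ∑ a ∈ univ.filter (fun a => M.tgt a = s), x a := by
    have h1 : ∀ s : S, v s * ∑ a ∈ univ.filter (fun a => M.src a = s), x a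
        = v s + γ * (v s * ∑ a ∈ univ.filter (fun a => M.tgt a = s), x a) := by
      intro s; rw [hfe s]; ring
    rw [Finset.sum_congr rfl fun s _ => h1 s, Finset.sum_add_distrib, Finset.mul_sum]
  have hkey : ∑ a : A, M.gain γ v a * x a
      = ∑ a : A, M.r a * x a + γ * ∑ a : A, v (M.tgt a) * x a
        - ∑ a : A, v (M.src a) * x a := by
    rw [Finset.mul_sum, ← Finset.sum_add_distrib, ← Finset.sum_sub_distrib]
    refine Finset.sum_congr rfl fun a _ => ?_
    simp only [DetMDP.gain]; ring
  rw [hkey, hA, hC, hB]; ring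

/-- Actions of the policy have zero gain with respect to the policy's value vector. -/
lemma gain_pol {γ : ℝ} {π : S → A} {v : S → ℝ}
    (hπ : M.IsPolicy π) (hval : M.IsValue γ π v) (s : S) :
    M.gain γ v (π s) = 0 := by
  have h1 := hval s
  simp only [DetMDP.gain, hπ s]
  linarith

/-- Total flux of any feasible solution. -/
lemma flux_total_s9 {γ : ℝ} {x : A → ℝ}
    (hfe : ∀ s : S, (∑ a ∈ univ.filter fun a => M.src a = s, x a)
      = 1 + γ * ∑ a ∈ univ.filter fun a => M.tgt a = s, x a) :
    (1 - γ) * ∑ a : A, x a = Fintype.card S := by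
  have h1 : ∑ a : A, x a
      = ∑ s : S, ∑ a ∈ univ.filter (fun a => M.src a = s), x a :=
    (Finset.sum_fiberwise _ _ _).symm
  have h2 : ∑ s : S, ∑ a ∈ univ.filter (fun a => M.tgt a = s), x a
      = ∑ a : A, x a := Finset.sum_fiberwise _ _ _
  have h3 : ∑ s : S, ∑ a ∈ univ.filter (fun a => M.src a = s), x a
      = ∑ s : S, (1 + γ * ∑ a ∈ univ.filter (fun a => M.tgt a = s), x a) :=
    Finset.sum_congr rfl fun s _ => hfe s
  rw [Finset.sum_add_distrib, Finset.sum_const, ← Finset.mul_sum, h2] at h3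
  have h4 : ∑ a : A, x a = (Fintype.card S : ℝ) + γ * ∑ a : A, x a := by
    conv_lhs => rw [h1, h3]
    rw [nsmul_eq_mul, mul_one, Finset.card_univ]
  linear_combination h4

/-- If `π'` has a cycle that is not a cycle of `π`, and `π'` agrees with `π`
away from `s0`, then `s0` lies on a cycle of `π'`. -/
lemma step_cycle_through {π π' : S → A} {s0 : S}
    (hupd : ∀ s, s ≠ s0 → π' s = π s)
    {C : Finset A} (hC : M.IsCycleOf π' C) (hnC : ¬ M.IsCycleOf π C) :
    ∃ k, 1 ≤ k ∧ k ≤ Fintype.card S ∧ (M.step π')^[k] s0 = s0 := by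
  obtain ⟨s, ⟨k, hk, hper⟩, hCeq⟩ := hC
  rw [Finset.mem_Icc] at hk
  have hhit : ∃ i, (M.step π')^[i] s = s0 := by
    by_contra h
    push_neg at h
    have hiter : ∀ i, (M.step π')^[i] s = (M.step π)^[i] s := by
      intro i; induction i with
      | zero => rfl
      | succ i ih =>
        rw [Function.iterate_succ_apply', Function.iterate_succ_apply', ← ih]
        show M.tgt (π' _) = M.tgt (π _)
        rw [hupd _ (h i)]
    apply hnC
    refine ⟨s, ⟨k, Finset.mem_Icc.mpr hk, by rw [← hiter k]; exact hper⟩, ?_⟩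
    rw [hCeq]
    refine Finset.image_congr fun i _ => ?_
    rw [← hiter i, hupd _ (h i)]
  obtain ⟨i, hi⟩ := hhit
  refine ⟨k, hk.1, hk.2, ?_⟩
  calc (M.step π')^[k] s0 = (M.step π')^[k] ((M.step π')^[i] s) := by rw [hi]
    _ = (M.step π')^[i] ((M.step π')^[k] s) := by
        rw [← Function.iterate_add_apply, ← Function.iterate_add_apply, Nat.add_comm]
    _ = (M.step π')^[i] s := by rw [hper]
    _ = s0 := hi

/-- Flux of a policy action on a cycle is at least `1/(1-γ)`. -/
lemma cycle_flux_ge {γ : ℝ} (hγ0 : 0 ≤ γ) (hγ1 : γ < 1) {π : S → A} {x : A → ℝ}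
    (hπ : M.IsPolicy π) (hx : M.IsFlux γ π x) (hxnn : ∀ a, 0 ≤ x a)
    (s0 : S) (k : ℕ) (hk : 1 ≤ k) (hcyc : (M.step π)^[k] s0 = s0) :
    1 / (1 - γ) ≤ x (π s0) := by
  have h1γ : (0:ℝ) < 1 - γ := by linarith
  set u : ℕ → ℝ := fun j => x (π ((M.step π)^[j] s0)) with hu
  have hstep : ∀ j, 1 + γ * u j ≤ u (j + 1) := by
    intro j
    set s := (M.step π)^[j] s0 with hs
    have hs' : (M.step π)^[j+1] s0 = M.step π s := Function.iterate_succ_apply' _ _ _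
    have heq : u (j+1)
        = 1 + γ * ∑ a ∈ univ.filter (fun a => M.tgt a = M.step π s), x a := by
      show x (π ((M.step π)^[j+1] s0)) = _
      rw [hs', ← flux_fiber M hπ hx (M.step π s)]
      exact hx.2 _
    have hmem : π s ∈ univ.filter (fun a => M.tgt a = M.step π s) :=
      mem_filter.mpr ⟨mem_univ _, rfl⟩
    have hle : x (π s) ≤ ∑ a ∈ univ.filter (fun a => M.tgt a = M.step π s), x a :=
      Finset.single_le_sum (fun a _ => hxnn a) hmem
    have := mul_le_mul_of_nonneg_left hle hγ0
    rw [heq]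
    show 1 + γ * x (π s) ≤ _
    linarith
  have hgeo : ∀ j, (∑ i ∈ Finset.range j, γ ^ i) + γ ^ j * u 0 ≤ u j := by
    intro j; induction j with
    | zero => simp
    | succ j ih =>
      have h2 := hstep j
      have h3 := mul_le_mul_of_nonneg_left ih hγ0
      rw [geom_sum_succ]
      calc γ * ∑ i ∈ Finset.range j, γ ^ i + 1 + γ ^ (j + 1) * u 0
          = 1 + γ * ((∑ i ∈ Finset.range j, γ ^ i) + γ ^ j * u 0) := by ring
        _ ≤ 1 + γ * u j := by linarith
        _ ≤ u (j + 1) := h2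
  have hk' := hgeo k
  have huk : u k = u 0 := by simp only [hu, hcyc, Function.iterate_zero, id]
  rw [huk] at hk'
  have hgs : (1 - γ) * ∑ i ∈ Finset.range k, γ ^ i = 1 - γ ^ k := by
    have := geom_sum_mul γ k
    linear_combination -this
  have hγk : γ ^ k < 1 := pow_lt_one₀ hγ0 hγ1 (by omega)
  rw [div_le_iff₀ h1γ]
  have hu0 : u 0 = x (π s0) := by simp [hu]
  rw [← hu0]
  have h5a : ∑ i ∈ Finset.range k, γ ^ i ≤ (1 - γ ^ k) * u 0 := by nlinarith [hk']
  have h5 : 1 - γ ^ k ≤ (1 - γ) * ((1 - γ ^ k) * u 0) := by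
    calc 1 - γ ^ k = (1 - γ) * ∑ i ∈ Finset.range k, γ ^ i := hgs.symm
      _ ≤ (1 - γ) * ((1 - γ ^ k) * u 0) := mul_le_mul_of_nonneg_left h5a h1γ.le
  nlinarith [h5, hγk]

end Aux

/-- If the simplex method pivots from `π` to `π'` creating a new
cycle, then for any optimal policy `π*` with flux `x*`,
`rᵀ(x* − x^{π'}) ≤ (1 − 1/n)·rᵀ(x* − x^π)`. -/
theorem cycle_pivot_contraction
    {S A : Type} [Fintype S] [Fintype A] [DecidableEq S] [DecidableEq A]
    (M : DetMDP S A) (γ : ℝ) (hγ0 : 0 ≤ γ) (hγ1 : γ < 1)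
    (π π' : S → A) (hπ : M.IsPolicy π)
    (hpivot : M.SimplexPivot γ π π')
    (hnew : ∃ C : Finset A, M.IsCycleOf π' C ∧ ¬ M.IsCycleOf π C)
    (πstar : S → A) (hπstar : M.IsPolicy πstar)
    (xstar : A → ℝ) (hxstar : M.IsFlux γ πstar xstar)
    (hopt : ∀ (π'' : S → A) (x'' : A → ℝ), M.IsPolicy π'' → M.IsFlux γ π'' x'' →
      ∑ a : A, M.r a * x'' a ≤ ∑ a : A, M.r a * xstar a)
    (x x' : A → ℝ) (hx : M.IsFlux γ π x) (hx' : M.IsFlux γ π' x') :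
    ∑ a : A, M.r a * (xstar a - x' a)
      ≤ (1 - 1 / (Fintype.card S : ℝ)) * ∑ a : A, M.r a * (xstar a - x a) := by
  classical
  obtain ⟨v, astar, hval, hgpos, hgmax, hπ'def⟩ := hpivot
  set s0 := M.src astar with hs0
  have hπ's0 : π' s0 = astar := by rw [hπ'def]; exact Function.update_self _ _ _
  have hupd : ∀ s, s ≠ s0 → π' s = π s := fun s hs => by
    rw [hπ'def]; exact Function.update_of_ne hs _ _
  have hπ' : M.IsPolicy π' := by
    intro s
    by_cases h : s = s0
    · subst h; rw [hπ's0, ← hs0]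
    · rw [hupd s h]; exact hπ s
  have hcardpos : 0 < Fintype.card S := Fintype.card_pos_iff.mpr ⟨s0⟩
  have hn : (1:ℝ) ≤ (Fintype.card S : ℝ) := by exact_mod_cast hcardpos
  have hn0 : (0:ℝ) < (Fintype.card S : ℝ) := by linarith
  have hx'nn := flux_nonneg_s9 M hγ0 hγ1 hπ' hx'
  have hxsnn := flux_nonneg_s9 M hγ0 hγ1 hπstar hxstar
  -- gain identities
  have hstar := gain_sum M γ v xstar hxstar.2
  have hxid := gain_sum M γ v x hx.2
  have hx'id := gain_sum M γ v x' hx'.2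
  -- ∑ gain * x = 0
  have hxzero : ∑ a : A, M.gain γ v a * x a = 0 := by
    refine Finset.sum_eq_zero fun a _ => ?_
    by_cases h : a = π (M.src a)
    · have : M.gain γ v a = 0 := by rw [h]; exact gain_pol M hπ hval _
      rw [this, zero_mul]
    · rw [hx.1 a h, mul_zero]
  have hxV : ∑ a : A, M.r a * x a = ∑ s : S, v s := by linarith
  -- ∑ gain * x' collapses to the pivot action
  have hcollapse : ∑ a : A, M.gain γ v a * x' a = M.gain γ v astar * x' astar := by
    refine Finset.sum_eq_single_of_mem astar (Finset.mem_univ _) fun b _ hbne => ?_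
    by_cases h : b = π' (M.src b)
    · have hsb : M.src b ≠ s0 := by
        intro hh
        exact hbne (by rw [h, hh, hπ's0])
      have hb' : b = π (M.src b) := h.trans (hupd _ hsb)
      have : M.gain γ v b = 0 := by rw [hb']; exact gain_pol M hπ hval (M.src b)
      rw [this, zero_mul]
    · rw [hx'.1 b h, mul_zero]
  -- the pivot action is on a cycle of π'
  obtain ⟨C, hC, hnC⟩ := hnew
  obtain ⟨k, hk1, hkn, hcyc⟩ := step_cycle_through M hupd hC hnC
  have hge : 1 / (1 - γ) ≤ x' (π' s0) :=
    cycle_flux_ge M hγ0 hγ1 hπ' hx' hx'nn s0 k hk1 hcyc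
  rw [hπ's0] at hge
  have h1γ : (0:ℝ) < 1 - γ := by linarith
  have hu1 : 1 ≤ (1 - γ) * x' astar := by
    rw [div_le_iff₀ h1γ] at hge; linarith
  -- bound on optimality gap
  have hDbound : ∑ a : A, M.gain γ v a * xstar a
      ≤ M.gain γ v astar * ∑ a : A, xstar a := by
    rw [Finset.mul_sum]
    exact Finset.sum_le_sum fun a _ => mul_le_mul_of_nonneg_right (hgmax a) (hxsnn a)
  have htot : (1 - γ) * ∑ a : A, xstar a = Fintype.card S := flux_total_s9 M hxstar.2
  set D : ℝ := ∑ a : A, M.gain γ v a * xstar a with hD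
  set G : ℝ := M.gain γ v astar with hG
  set u : ℝ := x' astar with husym
  set n : ℝ := (Fintype.card S : ℝ) with hnn
  -- D ≤ n * (G * u)
  have hDn : D ≤ n * (G * u) := by
    have hS : (0:ℝ) ≤ ∑ a : A, xstar a := Finset.sum_nonneg fun a _ => hxsnn a
    have h6 : (1 - γ) * D ≤ (1 - γ) * (G * ∑ a : A, xstar a) :=
      mul_le_mul_of_nonneg_left hDbound h1γ.le
    have h7 : (1 - γ) * (G * ∑ a : A, xstar a) = G * n := by
      rw [← htot]; ring
    have h8 : G * n ≤ G * n * ((1 - γ) * u) := by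
      nlinarith [mul_pos hgpos hn0]
    have h9 : (1 - γ) * D ≤ (1 - γ) * (n * (G * u)) := by nlinarith
    nlinarith
  -- rewrite goal
  have hL : ∑ a : A, M.r a * (xstar a - x' a)
      = (∑ a : A, M.r a * xstar a) - ∑ a : A, M.r a * x' a := by
    rw [← Finset.sum_sub_distrib]
    exact Finset.sum_congr rfl fun a _ => by ring
  have hR : ∑ a : A, M.r a * (xstar a - x a)
      = (∑ a : A, M.r a * xstar a) - ∑ a : A, M.r a * x a := by
    rw [← Finset.sum_sub_distrib]
    exact Finset.sum_congr rfl fun a _ => by ring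
  have hRD : (∑ a : A, M.r a * xstar a) - ∑ a : A, M.r a * x a = D := by
    rw [hD]; linarith
  have hLD : (∑ a : A, M.r a * xstar a) - ∑ a : A, M.r a * x' a = D - G * u := by
    rw [hD, hG, husym]; linarith
  rw [hL, hR, hRD, hLD]
  have hdiv : D * n⁻¹ ≤ G * u := by
    rw [← div_eq_mul_inv, div_le_iff₀ hn0]
    linarith [hDn]
  have e : (1 - 1 / n) * D = D - D * n⁻¹ := by
    field_simp
  linarith
end
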